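/- arXiv:1503.00239 — 18 statements merged into one kernel-verified Lean document; each statement's English description precedes it below -/
import Mathlib

section
/- Let dim H = d and suppose that ψ together with vectors ψ⊥_1, …, ψ⊥_{d−1} forms an orthonormal basis of H. Then for each sign s ∈ {+1, −1}, the sum of variances satisfies the uncertainty equality ΔA² + ΔB² = s·i⟨[A,B]⟩ + Σ_{k=1}^{d−1} |⟪ψ, (A + s·i·B) ψ⊥_k⟫|². -/
open scoped ComplexInnerProductSpace BigOperators

noncomputable section

variable {H : Type*} [NormedAddCommGroup H] [InnerProductSpace ℂ H]

/-- Expectation value ⟨A⟩ = Re ⟪ψ, A ψ⟫ of an operator in the state ψ. -/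
def expVal (ψ : H) (A : H →ₗ[ℂ] H) : ℝ := (⟪ψ, A ψ⟫).re

/-- Variance ΔA² = ⟨A²⟩ − ⟨A⟩². -/
def varOf (ψ : H) (A : H →ₗ[ℂ] H) : ℝ := (⟪ψ, A (A ψ)⟫).re - (expVal ψ A) ^ 2

/-- The real number i⟨[A,B]⟩. -/
def commRe (ψ : H) (A B : H →ₗ[ℂ] H) : ℝ :=
  (Complex.I * ⟪ψ, (A ∘ₗ B - B ∘ₗ A) ψ⟫).re

theorem variance_sum_uncertainty_equality
    {H : Type*} [NormedAddCommGroup H] [InnerProductSpace ℂ H] [FiniteDimensional ℂ H]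
    (A B : H →ₗ[ℂ] H) (hA : A.IsSymmetric) (hB : B.IsSymmetric)
    (ψ : H) (hψ : ‖ψ‖ = 1)
    (d : ℕ) (hd : Module.finrank ℂ H = d + 1)
    (ψperp : Fin d → H)
    (horth : Orthonormal ℂ (Fin.cons ψ ψperp : Fin (d + 1) → H))
    (s : ℝ) (hs : s = 1 ∨ s = -1) :
    varOf ψ A + varOf ψ B
      = s * commRe ψ A B
        + ∑ k : Fin d, ‖⟪ψ, (A + ((s : ℂ) * Complex.I) • B) (ψperp k)⟫‖ ^ 2 := by
  classical
  set a : ℂ := ⟪ψ, A ψ⟫ with ha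
  set b : ℂ := ⟪ψ, B ψ⟫ with hb
  set c : ℂ := (s : ℂ) * Complex.I with hc
  have hψψ : ⟪ψ, ψ⟫ = 1 := by
    rw [inner_self_eq_norm_sq_to_K, hψ]; norm_num
  have haR : (starRingEnd ℂ) a = a := by
    rw [ha, inner_conj_symm, hA ψ ψ]
  have hbR : (starRingEnd ℂ) b = b := by
    rw [hb, inner_conj_symm, hB ψ ψ]
  have hcconj : (starRingEnd ℂ) c = -c := by
    simp [hc, Complex.conj_ofReal]
  have hs2 : (s : ℂ) ^ 2 = 1 := by
    rcases hs with h | h <;> simp [h]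
  -- the vector χ
  set χ : H := (A ψ - a • ψ) - c • (B ψ - b • ψ) with hχ
  -- inner ⟪ψ, χ⟫ = 0
  have hψχ : ⟪ψ, χ⟫ = 0 := by
    simp [hχ, inner_sub_right, inner_smul_right, hψψ, hψ, ← ha, ← hb]
  -- ⟪χ, χ⟫ computed
  have hu : ⟪A ψ - a • ψ, A ψ - a • ψ⟫ = ⟪ψ, A (A ψ)⟫ - a ^ 2 := by
    simp only [inner_sub_left, inner_sub_right, inner_smul_left, inner_smul_right,
      hA (A ψ) ψ, hψψ, haR]
    rw [hA ψ ψ, ← ha, hA ψ (A ψ)]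
    ring
  have hv : ⟪B ψ - b • ψ, B ψ - b • ψ⟫ = ⟪ψ, B (B ψ)⟫ - b ^ 2 := by
    simp only [inner_sub_left, inner_sub_right, inner_smul_left, inner_smul_right,
      hB (B ψ) ψ, hψψ, hbR]
    rw [hB ψ ψ, ← hb, hB ψ (B ψ)]
    ring
  have huv : ⟪A ψ - a • ψ, B ψ - b • ψ⟫ = ⟪ψ, A (B ψ)⟫ - a * b := by
    simp only [inner_sub_left, inner_sub_right, inner_smul_left, inner_smul_right,
      hA ψ (B ψ), hψψ, haR]
    rw [hA ψ ψ, ← ha, ← hb]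
    ring
  have hvu : ⟪B ψ - b • ψ, A ψ - a • ψ⟫ = ⟪ψ, B (A ψ)⟫ - a * b := by
    simp only [inner_sub_left, inner_sub_right, inner_smul_left, inner_smul_right,
      hB ψ (A ψ), hψψ, hbR]
    rw [hB ψ ψ, ← ha, ← hb]
    ring
  have hcc : c * c = -1 := by
    have h2 : c * c = (s : ℂ) ^ 2 * Complex.I ^ 2 := by rw [hc]; ring
    rw [Complex.I_sq, hs2] at h2
    simpa using h2
  have key : ∀ u v : H, ⟪u - c • v, u - c • v⟫
      = ⟪u, u⟫ + ⟪v, v⟫ - c * (⟪u, v⟫ - ⟪v, u⟫) := by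
    intro u v
    simp only [inner_sub_left, inner_sub_right, inner_smul_left, inner_smul_right, hcconj]
    linear_combination (-(⟪v, v⟫ : ℂ)) * hcc
  have hχχ : ⟪χ, χ⟫
      = (⟪ψ, A (A ψ)⟫ - a ^ 2) + (⟪ψ, B (B ψ)⟫ - b ^ 2)
        - c * (⟪ψ, A (B ψ)⟫ - ⟪ψ, B (A ψ)⟫) := by
    rw [hχ, key (A ψ - a • ψ) (B ψ - b • ψ), hu, hv, huv, hvu]
    ring
  -- Parseval using the orthonormal basis
  have hcard : Fintype.card (Fin (d + 1)) = Module.finrank ℂ H := by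
    simp [hd]
  let bas : Module.Basis (Fin (d + 1)) ℂ H := basisOfOrthonormalOfCardEqFinrank horth hcard
  have hbas : (bas : Fin (d + 1) → H) = Fin.cons ψ ψperp :=
    coe_basisOfOrthonormalOfCardEqFinrank horth hcard
  let onb : OrthonormalBasis (Fin (d + 1)) ℂ H :=
    bas.toOrthonormalBasis (by rwa [hbas])
  have honb : ∀ i, onb i = (Fin.cons ψ ψperp : Fin (d + 1) → H) i := by
    intro i
    have h1 : (onb : Fin (d + 1) → H) = (bas : Fin (d + 1) → H) :=
      Module.Basis.coe_toOrthonormalBasis _ _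
    rw [h1, hbas]
  have hpar : ∑ i : Fin (d + 1), ⟪χ, onb i⟫ * ⟪onb i, χ⟫ = ⟪χ, χ⟫ :=
    onb.sum_inner_mul_inner χ χ
  have hterm : ∀ i : Fin (d + 1),
      ⟪χ, onb i⟫ * ⟪onb i, χ⟫ = ((‖⟪onb i, χ⟫‖ : ℝ) : ℂ) ^ 2 := by
    intro i
    rw [← inner_conj_symm χ (onb i)]
    exact RCLike.conj_mul _
  -- orthogonality of ψperp k with ψ
  have hperpψ : ∀ k : Fin d, ⟪ψperp k, ψ⟫ = 0 := by
    intro k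
    have := horth.2 (Fin.succ_ne_zero k)
    simpa using this
  -- value of ⟪ψperp k, χ⟫
  have hperpχ : ∀ k : Fin d,
      ⟪ψperp k, χ⟫ = ⟪ψperp k, A ψ⟫ - c * ⟪ψperp k, B ψ⟫ := by
    intro k
    simp [hχ, inner_sub_right, inner_smul_right, hperpψ k]
  -- relation to the statement's matrix elements
  have hconj : ∀ k : Fin d,
      ⟪ψ, (A + c • B) (ψperp k)⟫ = (starRingEnd ℂ) (⟪ψperp k, χ⟫) := by
    intro k
    rw [hperpχ k]
    simp only [LinearMap.add_apply, LinearMap.smul_apply, inner_add_right, inner_smul_right,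
      map_sub, map_mul, hcconj, inner_conj_symm]
    rw [hA ψ (ψperp k), hB ψ (ψperp k)]
    ring
  have hnorm : ∀ k : Fin d,
      ‖⟪ψ, (A + c • B) (ψperp k)⟫‖ = ‖⟪ψperp k, χ⟫‖ := by
    intro k
    rw [hconj k, RCLike.norm_conj]
  -- split the Parseval sum
  have hsum : ⟪χ, χ⟫
      = ∑ k : Fin d, ((‖⟪ψ, (A + c • B) (ψperp k)⟫‖ : ℝ) : ℂ) ^ 2 := by
    rw [← hpar]
    rw [Fin.sum_univ_succ]
    have h0 : onb 0 = ψ := by rw [honb 0]; simp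
    have hsucc : ∀ k : Fin d, onb k.succ = ψperp k := by
      intro k; rw [honb k.succ]; simp
    rw [h0]
    rw [← inner_conj_symm χ ψ, hψχ]
    simp only [map_zero, zero_mul, zero_add]
    refine Finset.sum_congr rfl fun k _ => ?_
    rw [hterm k.succ, hsucc k, hnorm k]
  -- take real parts
  have hfinal := congrArg Complex.re (hχχ.symm.trans hsum)
  -- identify real parts
  have haE : a.re ^ 2 = (a ^ 2).re := by
    have him : a.im = 0 := by
      have h := congrArg Complex.im haR
      rw [Complex.conj_im] at h
      linarith
    rw [sq a, Complex.mul_re, him]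
    ring
  have hbE : b.re ^ 2 = (b ^ 2).re := by
    have him : b.im = 0 := by
      have h := congrArg Complex.im hbR
      rw [Complex.conj_im] at h
      linarith
    rw [sq b, Complex.mul_re, him]
    ring
  have hcomm : (c * (⟪ψ, A (B ψ)⟫ - ⟪ψ, B (A ψ)⟫)).re = s * commRe ψ A B := by
    rw [commRe]
    have : ((A ∘ₗ B - B ∘ₗ A) ψ) = A (B ψ) - B (A ψ) := by simp
    rw [this, inner_sub_right, hc]
    rw [show (s : ℂ) * Complex.I * (⟪ψ, A (B ψ)⟫ - ⟪ψ, B (A ψ)⟫)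
        = (s : ℂ) * (Complex.I * (⟪ψ, A (B ψ)⟫ - ⟪ψ, B (A ψ)⟫)) by ring]
    rw [Complex.re_ofReal_mul]
  have hsumre : (∑ k : Fin d, ((‖⟪ψ, (A + c • B) (ψperp k)⟫‖ : ℝ) : ℂ) ^ 2).re
      = ∑ k : Fin d, ‖⟪ψ, (A + c • B) (ψperp k)⟫‖ ^ 2 := by
    rw [Complex.re_sum]
    refine Finset.sum_congr rfl fun k _ => ?_
    norm_cast
  rw [Complex.sub_re, Complex.add_re, Complex.sub_re, Complex.sub_re, hcomm, hsumre] at hfinal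
  rw [varOf, varOf, expVal, expVal, ← ha, ← hb]
  rw [haE, hbE]
  linarith [hfinal]
end
end

section
/- Let dim H = d, suppose ΔA > 0 and ΔB > 0, and suppose that ψ together with vectors ψ⊥_1, …, ψ⊥_{d−1} forms an orthonormal basis of H. Then for each sign s ∈ {+1, −1}, the product of standard deviations satisfies the uncertainty equality ΔA · ΔB · (1 − (1/2) Σ_{k=1}^{d−1} |⟪ψ, (A/ΔA + s·i·B/ΔB) ψ⊥_k⟫|²) = s·(i/2)⟨[A,B]⟩. -/
open scoped ComplexInnerProductSpace BigOperators

noncomputable section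

variable {H : Type*} [NormedAddCommGroup H] [InnerProductSpace ℂ H]

/-- Standard deviation ΔA = √(ΔA²). -/
def stdDev (ψ : H) (A : H →ₗ[ℂ] H) : ℝ := Real.sqrt (varOf ψ A)

/-- The projection Π = I − |ψ⟩⟨ψ|. -/
def projPerp (ψ : H) : H →ₗ[ℂ] H :=
  LinearMap.id - ((innerSL ℂ ψ).smulRight ψ).toLinearMap

/-- The deviation operator Ă = A − ⟨A⟩I. -/
def devOp (ψ : H) (A : H →ₗ[ℂ] H) : H →ₗ[ℂ] H :=
  A - (expVal ψ A : ℂ) • LinearMap.id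

/-- The operator C = −i[A,B]. -/
def opC (A B : H →ₗ[ℂ] H) : H →ₗ[ℂ] H := (-Complex.I) • (A ∘ₗ B - B ∘ₗ A)

/-- The operator F = ĂB̆ + B̆Ă. -/
def opF (ψ : H) (A B : H →ₗ[ℂ] H) : H →ₗ[ℂ] H :=
  devOp ψ A ∘ₗ devOp ψ B + devOp ψ B ∘ₗ devOp ψ A

theorem product_uncertainty_equality
    {H : Type*} [NormedAddCommGroup H] [InnerProductSpace ℂ H] [FiniteDimensional ℂ H]
    (A B : H →ₗ[ℂ] H) (hA : A.IsSymmetric) (hB : B.IsSymmetric)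
    (ψ : H) (hψ : ‖ψ‖ = 1)
    (hΔA : 0 < stdDev ψ A) (hΔB : 0 < stdDev ψ B)
    (d : ℕ) (hd : Module.finrank ℂ H = d + 1)
    (ψperp : Fin d → H)
    (horth : Orthonormal ℂ (Fin.cons ψ ψperp : Fin (d + 1) → H))
    (s : ℝ) (hs : s = 1 ∨ s = -1) :
    stdDev ψ A * stdDev ψ B *
        (1 - (1 / 2) * ∑ k : Fin d,
          ‖⟪ψ, (((stdDev ψ A : ℂ))⁻¹ • A
              + ((s : ℂ) * Complex.I * ((stdDev ψ B : ℂ))⁻¹) • B) (ψperp k)⟫‖ ^ 2)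
      = s * (commRe ψ A B / 2) := by
  set a := stdDev ψ A with haDef
  set b := stdDev ψ B with hbDef
  have ha : (0:ℝ) < a := hΔA
  have hb : (0:ℝ) < b := hΔB
  have hva : a ^ 2 = varOf ψ A := Real.sq_sqrt (Real.sqrt_pos.mp hΔA).le
  have hvb : b ^ 2 = varOf ψ B := Real.sq_sqrt (Real.sqrt_pos.mp hΔB).le
  set α := expVal ψ A with hαDef
  set β := expVal ψ B with hβDef
  set r : ℂ := ⟪A ψ, B ψ⟫ with hrDef
  have hAψ : (⟪ψ, A ψ⟫ : ℂ) = (α : ℂ) := by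
    have h1 : (starRingEnd ℂ) ⟪ψ, A ψ⟫ = ⟪ψ, A ψ⟫ :=
      (inner_conj_symm (A ψ) ψ).trans (hA ψ ψ)
    rw [Complex.conj_eq_iff_re] at h1
    exact h1.symm
  have hBψ : (⟪ψ, B ψ⟫ : ℂ) = (β : ℂ) := by
    have h1 : (starRingEnd ℂ) ⟪ψ, B ψ⟫ = ⟪ψ, B ψ⟫ :=
      (inner_conj_symm (B ψ) ψ).trans (hB ψ ψ)
    rw [Complex.conj_eq_iff_re] at h1
    exact h1.symm
  have hAA : (⟪A ψ, A ψ⟫ : ℂ) = ((a ^ 2 + α ^ 2 : ℝ) : ℂ) := by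
    rw [inner_self_eq_norm_sq_to_K]
    norm_cast
    rw [← inner_self_eq_norm_sq (𝕜 := ℂ), hA ψ (A ψ)]
    rw [hva]; simp [varOf, hαDef, expVal]
  have hBB : (⟪B ψ, B ψ⟫ : ℂ) = ((b ^ 2 + β ^ 2 : ℝ) : ℂ) := by
    rw [inner_self_eq_norm_sq_to_K]
    norm_cast
    rw [← inner_self_eq_norm_sq (𝕜 := ℂ), hB ψ (B ψ)]
    rw [hvb]; simp [varOf, hβDef, expVal]
  have hBA : (⟪B ψ, A ψ⟫ : ℂ) = (starRingEnd ℂ) r := by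
    rw [hrDef, inner_conj_symm]
  have hcomm : commRe ψ A B = -2 * r.im := by
    have h1 : (⟪ψ, (A ∘ₗ B - B ∘ₗ A) ψ⟫ : ℂ) = r - (starRingEnd ℂ) r := by
      simp only [LinearMap.sub_apply, LinearMap.comp_apply, inner_sub_right]
      rw [← hA ψ (B ψ), ← hB ψ (A ψ), hBA]
    rw [commRe, h1]
    simp [Complex.sub_re, Complex.sub_im, Complex.mul_re]
    ring
  set χ : H := (((a⁻¹ : ℝ)) : ℂ) • A ψ + (-((s : ℂ) * Complex.I * (((b⁻¹ : ℝ)) : ℂ))) • B ψ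
    with hχDef
  have hinner : ∀ v : H,
      (⟪ψ, (((a : ℂ))⁻¹ • A + ((s : ℂ) * Complex.I * ((b : ℂ))⁻¹) • B) v⟫ : ℂ)
        = ⟪χ, v⟫ := by
    intro v
    simp only [hχDef, LinearMap.add_apply, LinearMap.smul_apply, inner_add_left,
      inner_add_right, inner_smul_left, inner_smul_right, ← hA ψ v, ← hB ψ v,
      map_neg, map_mul, map_inv₀, Complex.conj_I, Complex.conj_ofReal,
      Complex.ofReal_inv]
    ring
  have hcard : Fintype.card (Fin (d + 1)) = Module.finrank ℂ H := by simp [hd]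
  let bb : Module.Basis (Fin (d + 1)) ℂ H :=
    basisOfLinearIndependentOfCardEqFinrank horth.linearIndependent hcard
  have hbb : ⇑bb = Fin.cons ψ ψperp :=
    coe_basisOfLinearIndependentOfCardEqFinrank _ _
  have horth' : Orthonormal ℂ ⇑bb := hbb ▸ horth
  let e : OrthonormalBasis (Fin (d + 1)) ℂ H := bb.toOrthonormalBasis horth'
  have he : ⇑e = Fin.cons ψ ψperp := by
    rw [Module.Basis.coe_toOrthonormalBasis, hbb]
  have hpar : ∑ i : Fin (d + 1), ⟪χ, e i⟫ * ⟪e i, χ⟫ = ⟪χ, χ⟫ :=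
    e.sum_inner_mul_inner χ χ
  have hterm : ∀ y : H, (⟪χ, y⟫ : ℂ) * ⟪y, χ⟫ = ((‖(⟪χ, y⟫ : ℂ)‖ : ℂ)) ^ 2 := by
    intro y
    rw [← inner_conj_symm y χ, Complex.mul_conj]
    simp [Complex.normSq_eq_norm_sq]
  rw [he] at hpar
  rw [Fin.sum_univ_succ] at hpar
  simp only [Fin.cons_zero, Fin.cons_succ] at hpar
  have hsum : (((∑ k : Fin d,
      ‖⟪ψ, (((a : ℂ))⁻¹ • A + ((s : ℂ) * Complex.I * ((b : ℂ))⁻¹) • B) (ψperp k)⟫‖ ^ 2 : ℝ)) : ℂ)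
      = ⟪χ, χ⟫ - ⟪χ, ψ⟫ * ⟪ψ, χ⟫ := by
    rw [← hpar]
    push_cast
    rw [Finset.sum_congr rfl (fun k _ => by
      rw [hinner (ψperp k), ← hterm (ψperp k)])]
    ring
  -- real value of ⟪χ, χ⟫
  have hχχ : (⟪χ, χ⟫ : ℂ).re =
      (a⁻¹)^2 * (a^2 + α^2) + s^2 * (b⁻¹)^2 * (b^2 + β^2) + 2 * s * a⁻¹ * b⁻¹ * r.im := by
    simp only [hχDef, inner_add_left, inner_add_right, inner_smul_left, inner_smul_right,
      map_neg, map_mul, Complex.conj_I, Complex.conj_ofReal,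
      hAA, hBB, hBA, ← hrDef]
    simp [Complex.add_re, Complex.mul_re, Complex.mul_im, Complex.ofReal_re,
      Complex.ofReal_im, Complex.I_re, Complex.I_im, Complex.conj_re, Complex.conj_im,
      ← Complex.ofReal_pow]
    ring
  have hψχ : (⟪χ, ψ⟫ * ⟪ψ, χ⟫ : ℂ).re = (a⁻¹ * α)^2 + s^2 * (b⁻¹ * β)^2 := by
    have h1 : (⟪ψ, χ⟫ : ℂ) = ((a⁻¹ * α : ℝ) : ℂ) - (s:ℂ) * Complex.I * ((b⁻¹ * β : ℝ) : ℂ) := by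
      simp only [hχDef, inner_add_right, inner_smul_right, hAψ, hBψ]
      push_cast
      ring
    rw [← inner_conj_symm χ ψ, h1]
    simp [Complex.mul_re, Complex.mul_im, Complex.conj_re, Complex.conj_im]
    ring
  -- put it together
  have hS : (∑ k : Fin d,
      ‖⟪ψ, (((a : ℂ))⁻¹ • A + ((s : ℂ) * Complex.I * ((b : ℂ))⁻¹) • B) (ψperp k)⟫‖ ^ 2 : ℝ)
      = ((a⁻¹)^2 * (a^2 + α^2) + s^2 * (b⁻¹)^2 * (b^2 + β^2) + 2 * s * a⁻¹ * b⁻¹ * r.im)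
        - ((a⁻¹ * α)^2 + s^2 * (b⁻¹ * β)^2) := by
    have := congrArg Complex.re hsum
    rwa [Complex.ofReal_re, Complex.sub_re, hχχ, hψχ] at this
  have hs2 : s ^ 2 = 1 := by rcases hs with h | h <;> rw [h] <;> norm_num
  rw [hs2] at hS
  rw [hS, hcomm]
  field_simp
  ring
end
end

section
/- Let Π = I − |ψ⟩⟨ψ| be the orthogonal projection onto the orthogonal complement of ψ. Then for each sign s ∈ {+1, −1}, the vector χ = (A − s·i·B)ψ satisfies ⟪χ, Π χ⟫ = ΔA² + ΔB² − s·i⟨[A,B]⟩; equivalently, ‖Π (A − s·i·B) ψ‖² = ΔA² + ΔB² − s·i⟨[A,B]⟩. -/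
open scoped ComplexInnerProductSpace BigOperators

noncomputable section

variable {H : Type*} [NormedAddCommGroup H] [InnerProductSpace ℂ H]

theorem proj_of_chi_gives_variance_sum
    {H : Type*} [NormedAddCommGroup H] [InnerProductSpace ℂ H] [FiniteDimensional ℂ H]
    (A B : H →ₗ[ℂ] H) (hA : A.IsSymmetric) (hB : B.IsSymmetric)
    (ψ : H) (hψ : ‖ψ‖ = 1)
    (s : ℝ) (hs : s = 1 ∨ s = -1) :
    ⟪(A - ((s : ℂ) * Complex.I) • B) ψ, projPerp ψ ((A - ((s : ℂ) * Complex.I) • B) ψ)⟫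
        = ((varOf ψ A + varOf ψ B - s * commRe ψ A B : ℝ) : ℂ)
      ∧ ‖projPerp ψ ((A - ((s : ℂ) * Complex.I) • B) ψ)‖ ^ 2
        = varOf ψ A + varOf ψ B - s * commRe ψ A B := by

  have hψc : ⟪ψ, ψ⟫ = (1:ℂ) := by
    rw [inner_self_eq_norm_sq_to_K, hψ]; norm_num
  have ha : ⟪ψ, A ψ⟫ = ((expVal ψ A : ℝ) : ℂ) := by
    have hc : (starRingEnd ℂ) ⟪ψ, A ψ⟫ = ⟪ψ, A ψ⟫ := by
      rw [inner_conj_symm]; exact hA ψ ψ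
    rw [Complex.conj_eq_iff_re] at hc
    exact hc.symm
  have hb : ⟪ψ, B ψ⟫ = ((expVal ψ B : ℝ) : ℂ) := by
    have hc : (starRingEnd ℂ) ⟪ψ, B ψ⟫ = ⟪ψ, B ψ⟫ := by
      rw [inner_conj_symm]; exact hB ψ ψ
    rw [Complex.conj_eq_iff_re] at hc
    exact hc.symm
  have hP : ⟪A ψ, A ψ⟫ = ((varOf ψ A + expVal ψ A ^ 2 : ℝ) : ℂ) := by
    have h1 : ⟪A ψ, A ψ⟫ = ⟪ψ, A (A ψ)⟫ := hA ψ (A ψ)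
    have h2 : ((Complex.re ⟪A ψ, A ψ⟫ : ℝ) : ℂ) = ⟪A ψ, A ψ⟫ := inner_self_ofReal_re _
    rw [← h2, h1]
    norm_cast
    simp [varOf]
  have hQ : ⟪B ψ, B ψ⟫ = ((varOf ψ B + expVal ψ B ^ 2 : ℝ) : ℂ) := by
    have h1 : ⟪B ψ, B ψ⟫ = ⟪ψ, B (B ψ)⟫ := hB ψ (B ψ)
    have h2 : ((Complex.re ⟪B ψ, B ψ⟫ : ℝ) : ℂ) = ⟪B ψ, B ψ⟫ := inner_self_ofReal_re _
    rw [← h2, h1]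
    norm_cast
    simp [varOf]
  have hcm : ⟪ψ, (A ∘ₗ B - B ∘ₗ A) ψ⟫ = ⟪A ψ, B ψ⟫ - ⟪B ψ, A ψ⟫ := by
    simp only [LinearMap.sub_apply, LinearMap.comp_apply, inner_sub_right]
    rw [← hA ψ (B ψ), ← hB ψ (A ψ)]
  have hcomm : Complex.I * (⟪A ψ, B ψ⟫ - ⟪B ψ, A ψ⟫) = ((commRe ψ A B : ℝ) : ℂ) := by
    have hre : (starRingEnd ℂ) (Complex.I * (⟪A ψ, B ψ⟫ - ⟪B ψ, A ψ⟫))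
        = Complex.I * (⟪A ψ, B ψ⟫ - ⟪B ψ, A ψ⟫) := by
      simp only [map_mul, map_sub, inner_conj_symm, Complex.conj_I]
      ring
    rw [Complex.conj_eq_iff_re] at hre
    rw [← hre]
    norm_cast
    rw [commRe, hcm]
  have hproj : ∀ x : H, projPerp ψ x = x - ⟪ψ, x⟫ • ψ := by
    intro x
    simp [projPerp]
  set χ := (A - ((s : ℂ) * Complex.I) • B) ψ with hχdef
  have hchi : χ = A ψ - ((s : ℂ) * Complex.I) • B ψ := by
    simp [hχdef, LinearMap.sub_apply]
  have hs2 : (s : ℂ) * (s : ℂ) = 1 := by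
    rcases hs with rfl | rfl <;> norm_num
  have key : ⟪χ, projPerp ψ χ⟫ = ((varOf ψ A + varOf ψ B - s * commRe ψ A B : ℝ) : ℂ) := by
    rw [hproj, inner_sub_right, inner_smul_right, ← inner_conj_symm ψ χ]
    rw [hchi]
    simp only [inner_sub_left, inner_sub_right, inner_smul_left, inner_smul_right,
      map_mul, map_sub, Complex.conj_I, Complex.conj_ofReal]
    have ha' : ⟪A ψ, ψ⟫ = ((expVal ψ A : ℝ) : ℂ) := by
      rw [← inner_conj_symm, ha, Complex.conj_ofReal]
    have hb' : ⟪B ψ, ψ⟫ = ((expVal ψ B : ℝ) : ℂ) := by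
      rw [← inner_conj_symm, hb, Complex.conj_ofReal]
    rw [ha', hb', hP, hQ]
    simp only [Complex.conj_ofReal, map_neg, Complex.conj_I]
    rcases hs with rfl | rfl
    · push_cast
      linear_combination -hcomm - (varOf ψ B : ℂ) * Complex.I_sq
    · push_cast
      linear_combination hcomm - (varOf ψ B : ℂ) * Complex.I_sq
  refine ⟨key, ?_⟩
  have hidem : ⟪projPerp ψ χ, projPerp ψ χ⟫ = ⟪χ, projPerp ψ χ⟫ := by
    rw [hproj]
    simp only [inner_sub_left, inner_sub_right, inner_smul_left, inner_smul_right, hψc]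
    ring
  have hnorm : (‖projPerp ψ χ‖ : ℝ) ^ 2 = RCLike.re ⟪projPerp ψ χ, projPerp ψ χ⟫ :=
    (inner_self_eq_norm_sq _).symm
  rw [hnorm, hidem, key]
  simp
end
end

section
/- Suppose ΔA > 0 and ΔB > 0, and let Π = I − |ψ⟩⟨ψ| be the orthogonal projection onto the orthogonal complement of ψ. Then for each sign s ∈ {+1, −1}, the vector ξ = (A/ΔA − s·i·B/ΔB)ψ satisfies ⟪ξ, Π ξ⟫ = 2 − s·i⟨[A,B]⟩/(ΔA·ΔB). -/
open scoped ComplexInnerProductSpace BigOperators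

noncomputable section

variable {H : Type*} [NormedAddCommGroup H] [InnerProductSpace ℂ H]

set_option maxHeartbeats 1000000 in
theorem proj_of_xi_gives_normalized_commutator
    {H : Type*} [NormedAddCommGroup H] [InnerProductSpace ℂ H] [FiniteDimensional ℂ H]
    (A B : H →ₗ[ℂ] H) (hA : A.IsSymmetric) (hB : B.IsSymmetric)
    (ψ : H) (hψ : ‖ψ‖ = 1)
    (hΔA : 0 < stdDev ψ A) (hΔB : 0 < stdDev ψ B)
    (s : ℝ) (hs : s = 1 ∨ s = -1) :
    ⟪(((stdDev ψ A : ℂ))⁻¹ • A - ((s : ℂ) * Complex.I * ((stdDev ψ B : ℂ))⁻¹) • B) ψ,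
        projPerp ψ ((((stdDev ψ A : ℂ))⁻¹ • A
          - ((s : ℂ) * Complex.I * ((stdDev ψ B : ℂ))⁻¹) • B) ψ)⟫
      = ((2 - s * commRe ψ A B / (stdDev ψ A * stdDev ψ B) : ℝ) : ℂ) := by
  set a := stdDev ψ A with ha
  set b := stdDev ψ B with hb
  have hva : 0 < varOf ψ A := Real.sqrt_pos.mp hΔA
  have hvb : 0 < varOf ψ B := Real.sqrt_pos.mp hΔB
  have ha2 : a ^ 2 = varOf ψ A := Real.sq_sqrt hva.le
  have hb2 : b ^ 2 = varOf ψ B := Real.sq_sqrt hvb.le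
  -- real expectation values
  have hα : ⟪ψ, A ψ⟫ = ((expVal ψ A : ℝ) : ℂ) := by
    rw [expVal, eq_comm, ← Complex.conj_eq_iff_re, inner_conj_symm, hA]
  have hβ : ⟪ψ, B ψ⟫ = ((expVal ψ B : ℝ) : ℂ) := by
    rw [expVal, eq_comm, ← Complex.conj_eq_iff_re, inner_conj_symm, hB]
  have huu : ⟪A ψ, A ψ⟫ = ((varOf ψ A + expVal ψ A ^ 2 : ℝ) : ℂ) := by
    rw [hA ψ (A ψ)]
    have : ⟪ψ, A (A ψ)⟫ = ((⟪ψ, A (A ψ)⟫.re : ℝ) : ℂ) := by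
      rw [eq_comm, ← Complex.conj_eq_iff_re, ← hA, inner_conj_symm]
    rw [this, varOf]; push_cast; ring_nf
  have hvv : ⟪B ψ, B ψ⟫ = ((varOf ψ B + expVal ψ B ^ 2 : ℝ) : ℂ) := by
    rw [hB ψ (B ψ)]
    have : ⟪ψ, B (B ψ)⟫ = ((⟪ψ, B (B ψ)⟫.re : ℝ) : ℂ) := by
      rw [eq_comm, ← Complex.conj_eq_iff_re, ← hB, inner_conj_symm]
    rw [this, varOf]; push_cast; ring_nf
  set r := ⟪A ψ, B ψ⟫ with hr
  have hvu : ⟪B ψ, A ψ⟫ = (starRingEnd ℂ) r := by rw [hr, inner_conj_symm]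
  have hcomm : commRe ψ A B = -2 * r.im := by
    have h1 : ⟪ψ, A (B ψ)⟫ = r := (hA ψ (B ψ)).symm
    have h2 : ⟪ψ, B (A ψ)⟫ = (starRingEnd ℂ) r := by
      rw [← hvu, hB]
    simp [commRe, LinearMap.sub_apply, LinearMap.comp_apply, inner_sub_right, h1, h2,
      Complex.mul_re]
    ring
  have hψψ : ⟪ψ, ψ⟫ = (1 : ℂ) := by
    simp [inner_self_eq_norm_sq_to_K, hψ]
  simp only [projPerp, LinearMap.sub_apply, LinearMap.smul_apply, LinearMap.id_apply,
    ContinuousLinearMap.coe_coe, coe_innerSL_apply, innerSL_apply_apply, ContinuousLinearMap.smulRight_apply,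
    inner_sub_left, inner_sub_right, inner_smul_left, inner_smul_right,
    hα, hβ, huu, hvv, ← hr, hvu, hψψ, hcomm]
  have hα' : ⟪A ψ, ψ⟫ = ((expVal ψ A : ℝ) : ℂ) := by
    rw [← inner_conj_symm, hα]; simp
  have hβ' : ⟪B ψ, ψ⟫ = ((expVal ψ B : ℝ) : ℂ) := by
    rw [← inner_conj_symm, hβ]; simp
  rw [hα', hβ', ← ha2, ← hb2]
  clear_value r
  rw [hr] at hvu hcomm
  clear hr
  obtain ⟨x, y⟩ := r
  rw [Complex.mk_eq_add_mul_I] at *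
  have haC : ((a:ℂ)) ≠ 0 := by exact_mod_cast hΔA.ne'
  have hbC : ((b:ℂ)) ≠ 0 := by exact_mod_cast hΔB.ne'
  clear_value a b
  clear hα hβ huu hvv hψψ hα' hβ' hvu hcomm hva hvb ha2 hb2 hΔA hΔB hψ hA hB
  simp only [map_mul, map_inv₀, Complex.conj_ofReal, Complex.conj_I, map_add,
    Complex.add_re, Complex.add_im, Complex.ofReal_re, Complex.ofReal_im,
    Complex.mul_re, Complex.mul_im, Complex.I_re, Complex.I_im] at *

  rcases hs with h | h <;> subst h <;> push_cast <;> field_simp <;> ring_nf <;>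
    simp only [Complex.I_sq] <;> ring_nf
  all_goals
    have ha5 : ((a:ℂ))^5 * ((a:ℂ))⁻¹^5 = 1 := by
      rw [← mul_pow, mul_inv_cancel₀ haC, one_pow]
    have hb5 : ((b:ℂ))^5 * ((b:ℂ))⁻¹^5 = 1 := by
      rw [← mul_pow, mul_inv_cancel₀ hbC, one_pow]
end
end

section
/- For every unit vector ψ⊥ ∈ H with ⟪ψ, ψ⊥⟫ = 0 and each sign s ∈ {+1, −1}, the Maccone–Pati sum uncertainty relation holds: ΔA² + ΔB² ≥ s·i⟨[A,B]⟩ + |⟪ψ, (A + s·i·B) ψ⊥⟫|². -/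
open scoped ComplexInnerProductSpace BigOperators

noncomputable section

variable {H : Type*} [NormedAddCommGroup H] [InnerProductSpace ℂ H]

theorem maccone_pati_sum_uncertainty
    {H : Type*} [NormedAddCommGroup H] [InnerProductSpace ℂ H] [FiniteDimensional ℂ H]
    (A B : H →ₗ[ℂ] H) (hA : A.IsSymmetric) (hB : B.IsSymmetric)
    (ψ : H) (hψ : ‖ψ‖ = 1)
    (ψperp : H) (hperpunit : ‖ψperp‖ = 1) (hperp : ⟪ψ, ψperp⟫ = 0)
    (s : ℝ) (hs : s = 1 ∨ s = -1) :
    varOf ψ A + varOf ψ B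
      ≥ s * commRe ψ A B + ‖⟪ψ, (A + ((s : ℂ) * Complex.I) • B) ψperp⟫‖ ^ 2 := by
  have hs2 : s ^ 2 = 1 := by rcases hs with h | h <;> rw [h] <;> norm_num
  have hψc : ⟪ψ, ψ⟫ = (1 : ℂ) := by
    rw [inner_self_eq_norm_sq_to_K, hψ]; norm_num
  have hperp' : ⟪ψperp, ψ⟫ = 0 := by
    rw [← inner_conj_symm, hperp, map_zero]
  have real_exp : ∀ (T : H →ₗ[ℂ] H), T.IsSymmetric →
      ⟪ψ, T ψ⟫ = ((expVal ψ T : ℝ) : ℂ) := by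
    intro T hT
    have : (starRingEnd ℂ) ⟪ψ, T ψ⟫ = ⟪ψ, T ψ⟫ := by
      rw [inner_conj_symm]; exact hT ψ ψ
    exact (Complex.conj_eq_iff_re.mp this).symm
  have hAr := real_exp A hA
  have hBr := real_exp B hB
  set eA : ℂ := ((expVal ψ A : ℝ) : ℂ) with heA
  set eB : ℂ := ((expVal ψ B : ℝ) : ℂ) with heB
  have hAψ : ⟪A ψ, ψ⟫ = eA := by rw [hA ψ ψ, hAr]
  have hBψ : ⟪B ψ, ψ⟫ = eB := by rw [hB ψ ψ, hBr]
  have hceA : (starRingEnd ℂ) eA = eA := Complex.conj_ofReal _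
  have hceB : (starRingEnd ℂ) eB = eB := Complex.conj_ofReal _
  set a : H := A ψ - eA • ψ with ha
  set b : H := B ψ - eB • ψ with hb
  set v : H := a - ((s : ℂ) * Complex.I) • b with hv
  have haa : ⟪a, a⟫ = ⟪ψ, A (A ψ)⟫ - eA ^ 2 := by
    simp only [ha, inner_sub_left, inner_sub_right, inner_smul_left, inner_smul_right,
      hψc, hAr, hBr, hAψ, hBψ, hceA, hceB, hA ψ (A ψ)]
    rw [← hA ψ (A ψ)]
    ring
  have hbb : ⟪b, b⟫ = ⟪ψ, B (B ψ)⟫ - eB ^ 2 := by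
    simp only [hb, inner_sub_left, inner_sub_right, inner_smul_left, inner_smul_right,
      hψc, hBr, hBψ, hceB]
    rw [← hB ψ (B ψ)]
    ring
  have hab : ⟪a, b⟫ = ⟪ψ, A (B ψ)⟫ - eA * eB := by
    simp only [ha, hb, inner_sub_left, inner_sub_right, inner_smul_left, inner_smul_right,
      hψc, hAr, hBr, hAψ, hBψ, hceA, hceB]
    rw [← hA ψ (B ψ)]
    ring
  have hba : ⟪b, a⟫ = ⟪ψ, B (A ψ)⟫ - eA * eB := by
    simp only [ha, hb, inner_sub_left, inner_sub_right, inner_smul_left, inner_smul_right,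
      hψc, hAr, hBr, hAψ, hBψ, hceA, hceB]
    rw [← hB ψ (A ψ)]
    ring
  -- the key norm computation
  have hvv : (⟪v, v⟫).re = varOf ψ A + varOf ψ B - s * commRe ψ A B := by
    have hsC : ((s : ℝ) : ℂ) ^ 2 = 1 := by
      rw [← Complex.ofReal_pow, hs2, Complex.ofReal_one]
    have expand : ⟪v, v⟫ = ⟪a, a⟫ + ⟪b, b⟫
        - ((s : ℂ) * Complex.I) * (⟪a, b⟫ - ⟪b, a⟫) := by
      simp only [hv, inner_sub_left, inner_sub_right, inner_smul_left, inner_smul_right,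
        map_mul, Complex.conj_ofReal, Complex.conj_I]
      linear_combination (-(((s:ℝ):ℂ)) ^ 2 * (⟪b, b⟫ : ℂ)) * Complex.I_sq + (⟪b, b⟫ : ℂ) * hsC
    rw [expand, haa, hbb, hab, hba]
    have hcomm : commRe ψ A B =
        (Complex.I * (⟪ψ, A (B ψ)⟫ - ⟪ψ, B (A ψ)⟫)).re := by
      simp [commRe, LinearMap.sub_apply, inner_sub_right, LinearMap.comp_apply]
    simp only [varOf, hcomm]
    have h1 : (⟪ψ, A (B ψ)⟫ - eA * eB) - (⟪ψ, B (A ψ)⟫ - eA * eB)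
        = ⟪ψ, A (B ψ)⟫ - ⟪ψ, B (A ψ)⟫ := by ring
    rw [h1]
    simp only [Complex.add_re, Complex.sub_re, Complex.mul_re, Complex.ofReal_re,
      Complex.ofReal_im, Complex.mul_im, Complex.I_re, Complex.I_im, heA, heB, ← Complex.ofReal_pow, Complex.ofReal_re, Complex.ofReal_im]
    ring
  -- Cauchy-Schwarz part
  have hinner : ⟪ψperp, v⟫ =
      (starRingEnd ℂ) ⟪ψ, (A + ((s : ℂ) * Complex.I) • B) ψperp⟫ := by
    have h1 : ⟪ψperp, A ψ⟫ = (starRingEnd ℂ) ⟪ψ, A ψperp⟫ := by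
      rw [← inner_conj_symm, hA]
    have h2 : ⟪ψperp, B ψ⟫ = (starRingEnd ℂ) ⟪ψ, B ψperp⟫ := by
      rw [← inner_conj_symm, hB]
    simp only [hv, ha, hb, inner_sub_right, inner_smul_right, hperp', h1, h2,
      LinearMap.add_apply, LinearMap.smul_apply, inner_add_right, map_add, map_mul,
      Complex.conj_ofReal, Complex.conj_I,
      mul_zero, sub_zero]
    ring
  have hnormeq : ‖⟪ψ, (A + ((s : ℂ) * Complex.I) • B) ψperp⟫‖ = ‖⟪ψperp, v⟫‖ := by
    rw [hinner, RCLike.norm_conj]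
  have hcs : ‖⟪ψperp, v⟫‖ ≤ ‖v‖ := by
    calc ‖⟪ψperp, v⟫‖ ≤ ‖ψperp‖ * ‖v‖ := norm_inner_le_norm _ _
    _ = ‖v‖ := by rw [hperpunit, one_mul]
  have hvnorm : ‖v‖ ^ 2 = varOf ψ A + varOf ψ B - s * commRe ψ A B := by
    rw [← hvv, ← inner_self_eq_norm_sq (𝕜 := ℂ)]
    rfl
  have hfin : ‖⟪ψ, (A + ((s : ℂ) * Complex.I) • B) ψperp⟫‖ ^ 2
      ≤ varOf ψ A + varOf ψ B - s * commRe ψ A B := by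
    rw [hnormeq, ← hvnorm]
    exact pow_le_pow_left₀ (norm_nonneg _) hcs 2
  linarith
end
end

section
/- For every orthonormal family ψ⊥_1, …, ψ⊥_m of vectors in H, each orthogonal to ψ, and each sign s ∈ {+1, −1}, the following hierarchical uncertainty relation holds: ΔA² + ΔB² ≥ s·i⟨[A,B]⟩ + Σ_{k=1}^{m} |⟪ψ, (A + s·i·B) ψ⊥_k⟫|². -/
open scoped ComplexInnerProductSpace BigOperators

noncomputable section

variable {H : Type*} [NormedAddCommGroup H] [InnerProductSpace ℂ H]

theorem hierarchical_sum_uncertainty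
    {H : Type*} [NormedAddCommGroup H] [InnerProductSpace ℂ H] [FiniteDimensional ℂ H]
    (A B : H →ₗ[ℂ] H) (hA : A.IsSymmetric) (hB : B.IsSymmetric)
    (ψ : H) (hψ : ‖ψ‖ = 1)
    (m : ℕ) (ψperp : Fin m → H) (horth : Orthonormal ℂ ψperp)
    (hperp : ∀ k, ⟪ψ, ψperp k⟫ = 0)
    (s : ℝ) (hs : s = 1 ∨ s = -1) :
    varOf ψ A + varOf ψ B
      ≥ s * commRe ψ A B
        + ∑ k : Fin m, ‖⟪ψ, (A + ((s : ℂ) * Complex.I) • B) (ψperp k)⟫‖ ^ 2 := by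
  set a : ℝ := expVal ψ A with ha
  set b : ℝ := expVal ψ B with hb
  set f : H := (A ψ - (a:ℂ) • ψ) - ((s:ℂ) * Complex.I) • (B ψ - (b:ℂ) • ψ) with hf
  have hs2 : s * s = 1 := by rcases hs with h|h <;> norm_num [h]
  have hψ2 : ⟪ψ, ψ⟫ = (1:ℂ) := by
    rw [inner_self_eq_norm_sq_to_K, hψ]; norm_num
  have h1 : ∀ k, ⟪ψ, (A + ((s : ℂ) * Complex.I) • B) (ψperp k)⟫ = ⟪f, ψperp k⟫ := by
    intro k
    have hA' := hA ψ (ψperp k)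
    have hB' := hB ψ (ψperp k)
    simp only [LinearMap.add_apply, LinearMap.smul_apply, inner_add_right, inner_smul_right,
      hf, inner_sub_left, inner_smul_left, hperp k, ← hA', ← hB', map_mul, Complex.conj_ofReal,
      Complex.conj_I]
    ring
  have bessel := horth.sum_inner_products_le (s := Finset.univ) f
  have hsum : ∑ k : Fin m, ‖⟪ψ, (A + ((s : ℂ) * Complex.I) • B) (ψperp k)⟫‖ ^ 2
      ≤ ‖f‖ ^ 2 := by
    refine le_trans (le_of_eq ?_) bessel
    refine Finset.sum_congr rfl fun k _ => ?_
    rw [h1 k, ← norm_inner_symm]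
  -- real expectation values
  have hAψ' : ⟪ψ, A ψ⟫ = (a : ℂ) := by
    have h2 : (starRingEnd ℂ) ⟪ψ, A ψ⟫ = ⟪ψ, A ψ⟫ := by
      rw [inner_conj_symm]; exact hA ψ ψ
    exact (Complex.conj_eq_iff_re.mp h2).symm
  have hBψ' : ⟪ψ, B ψ⟫ = (b : ℂ) := by
    have h2 : (starRingEnd ℂ) ⟪ψ, B ψ⟫ = ⟪ψ, B ψ⟫ := by
      rw [inner_conj_symm]; exact hB ψ ψ
    exact (Complex.conj_eq_iff_re.mp h2).symm
  have hAψ : ⟪A ψ, ψ⟫ = (a : ℂ) := by rw [hA ψ ψ]; exact hAψ'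
  have hBψ : ⟪B ψ, ψ⟫ = (b : ℂ) := by rw [hB ψ ψ]; exact hBψ'
  have e1 : ⟪A ψ, A ψ⟫ = ⟪ψ, A (A ψ)⟫ := hA ψ (A ψ)
  have e2 : ⟪A ψ, B ψ⟫ = ⟪ψ, A (B ψ)⟫ := hA ψ (B ψ)
  have e3 : ⟪B ψ, A ψ⟫ = ⟪ψ, B (A ψ)⟫ := hB ψ (A ψ)
  have e4 : ⟪B ψ, B ψ⟫ = ⟪ψ, B (B ψ)⟫ := hB ψ (B ψ)
  have hw : ⟪ψ, B (A ψ)⟫ = (starRingEnd ℂ) ⟪ψ, A (B ψ)⟫ := by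
    rw [← e3, ← e2]; exact (inner_conj_symm _ _).symm
  have h3 : ‖f‖ ^ 2 = varOf ψ A + varOf ψ B - s * commRe ψ A B := by
    have hnorm : (‖f‖:ℝ) ^ 2 = (⟪f, f⟫ : ℂ).re := by
      rw [← @inner_self_eq_norm_sq ℂ]; rfl
    rw [hnorm, hf]
    simp only [inner_sub_left, inner_sub_right, inner_smul_left, inner_smul_right,
      map_mul, Complex.conj_ofReal, Complex.conj_I, hψ2,
      e1, e2, e3, e4, hAψ, hBψ, hAψ', hBψ', hw]
    simp only [varOf, commRe, ← ha, ← hb, LinearMap.sub_apply, LinearMap.comp_apply,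
      inner_sub_right, hw]
    set z : ℂ := ⟪ψ, A (B ψ)⟫
    set zA : ℂ := ⟪ψ, A (A ψ)⟫
    set zB : ℂ := ⟪ψ, B (B ψ)⟫
    simp only [Complex.sub_re, Complex.add_re, Complex.mul_re, Complex.mul_im,
      Complex.conj_re, Complex.conj_im, Complex.I_re, Complex.I_im, Complex.ofReal_re,
      Complex.ofReal_im, Complex.one_re, Complex.one_im, Complex.sub_im, Complex.add_im,
      Complex.neg_re, Complex.neg_im]
    have hsq : s ^ 2 = 1 := by rw [sq, hs2]
    ring_nf
    linear_combination ((⟪ψ, B (B ψ)⟫ : ℂ).re - b ^ 2) * hsq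
  linarith
end
end

section
/- Suppose ΔA > 0 and ΔB > 0. For every unit vector ψ⊥ ∈ H with ⟪ψ, ψ⊥⟫ = 0 and each sign s ∈ {+1, −1}, the amended Robertson uncertainty relation holds: ΔA·ΔB·(1 − (1/2)|⟪ψ, (A/ΔA + s·i·B/ΔB) ψ⊥⟫|²) ≥ s·(i/2)⟨[A,B]⟩. -/
open scoped ComplexInnerProductSpace BigOperators

noncomputable section

variable {H : Type*} [NormedAddCommGroup H] [InnerProductSpace ℂ H]

lemma aux_real_smul_inner_left {H : Type*} [NormedAddCommGroup H] [InnerProductSpace ℂ H]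
    (r : ℝ) (x y : H) : ⟪r • x, y⟫ = (r : ℂ) * ⟪x, y⟫ := by
  rw [RCLike.real_smul_eq_coe_smul (K := ℂ), inner_smul_left]
  norm_cast
  simp

lemma aux_real_smul_inner_right {H : Type*} [NormedAddCommGroup H] [InnerProductSpace ℂ H]
    (r : ℝ) (x y : H) : ⟪x, r • y⟫ = (r : ℂ) * ⟪x, y⟫ := by
  rw [RCLike.real_smul_eq_coe_smul (K := ℂ), inner_smul_right]
  norm_cast


theorem amended_robertson_uncertainty
    {H : Type*} [NormedAddCommGroup H] [InnerProductSpace ℂ H] [FiniteDimensional ℂ H]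
    (A B : H →ₗ[ℂ] H) (hA : A.IsSymmetric) (hB : B.IsSymmetric)
    (ψ : H) (hψ : ‖ψ‖ = 1)
    (hΔA : 0 < stdDev ψ A) (hΔB : 0 < stdDev ψ B)
    (ψperp : H) (hperpunit : ‖ψperp‖ = 1) (hperp : ⟪ψ, ψperp⟫ = 0)
    (s : ℝ) (hs : s = 1 ∨ s = -1) :
    stdDev ψ A * stdDev ψ B *
        (1 - (1 / 2) * ‖⟪ψ, (((stdDev ψ A : ℂ))⁻¹ • A
            + ((s : ℂ) * Complex.I * ((stdDev ψ B : ℂ))⁻¹) • B) ψperp⟫‖ ^ 2)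
      ≥ s * (commRe ψ A B / 2) := by
  have hs2 : s ^ 2 = 1 := by rcases hs with h | h <;> simp [h]
  set a := stdDev ψ A with ha
  set b := stdDev ψ B with hb
  set c := expVal ψ A with hc
  set d := expVal ψ B with hd
  have hva : a ^ 2 = varOf ψ A := Real.sq_sqrt (Real.sqrt_pos.mp hΔA).le
  have hvb : b ^ 2 = varOf ψ B := Real.sq_sqrt (Real.sqrt_pos.mp hΔB).le
  have hψ1 : ⟪ψ, ψ⟫ = (1 : ℂ) := by
    rw [inner_self_eq_norm_sq_to_K, hψ]; norm_num
  have hAψ : ⟪ψ, A ψ⟫ = (c : ℂ) := by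
    have h1 : (starRingEnd ℂ) ⟪ψ, A ψ⟫ = ⟪ψ, A ψ⟫ := by
      rw [inner_conj_symm]; exact hA ψ ψ
    exact (Complex.conj_eq_iff_re.mp h1).symm
  have hBψ : ⟪ψ, B ψ⟫ = (d : ℂ) := by
    have h1 : (starRingEnd ℂ) ⟪ψ, B ψ⟫ = ⟪ψ, B ψ⟫ := by
      rw [inner_conj_symm]; exact hB ψ ψ
    exact (Complex.conj_eq_iff_re.mp h1).symm
  have hAψ' : ⟪A ψ, ψ⟫ = (c : ℂ) := (hA ψ ψ).trans hAψ
  have hBψ' : ⟪B ψ, ψ⟫ = (d : ℂ) := (hB ψ ψ).trans hBψ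
  have hAA : ⟪A ψ, A ψ⟫ = ((a ^ 2 + c ^ 2 : ℝ) : ℂ) := by
    have h1 : ⟪A ψ, A ψ⟫ = ⟪ψ, A (A ψ)⟫ := hA ψ (A ψ)
    have h2 : (starRingEnd ℂ) ⟪A ψ, A ψ⟫ = ⟪A ψ, A ψ⟫ := inner_conj_symm _ _
    rw [h1] at h2 ⊢
    rw [(Complex.conj_eq_iff_re.mp h2).symm, Complex.ofReal_inj]
    have hv : varOf ψ A = (⟪ψ, A (A ψ)⟫).re - c ^ 2 := rfl
    linarith [hva, hv]
  have hBB : ⟪B ψ, B ψ⟫ = ((b ^ 2 + d ^ 2 : ℝ) : ℂ) := by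
    have h1 : ⟪B ψ, B ψ⟫ = ⟪ψ, B (B ψ)⟫ := hB ψ (B ψ)
    have h2 : (starRingEnd ℂ) ⟪B ψ, B ψ⟫ = ⟪B ψ, B ψ⟫ := inner_conj_symm _ _
    rw [h1] at h2 ⊢
    rw [(Complex.conj_eq_iff_re.mp h2).symm, Complex.ofReal_inj]
    have hv : varOf ψ B = (⟪ψ, B (B ψ)⟫).re - d ^ 2 := rfl
    linarith [hvb, hv]
  set p := ⟪A ψ, B ψ⟫ with hp
  have hBA : ⟪B ψ, A ψ⟫ = (starRingEnd ℂ) p := (inner_conj_symm _ _).symm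
  have hcomm : commRe ψ A B = -2 * p.im := by
    have h1 : ⟪ψ, A (B ψ)⟫ = p := (hA ψ (B ψ)).symm
    have h2 : ⟪ψ, B (A ψ)⟫ = (starRingEnd ℂ) p := (hB ψ (A ψ)).symm.trans hBA
    simp [commRe, inner_sub_right, h1, h2, Complex.mul_re]
    ring
  set u : H := A ψ - (c : ℂ) • ψ with hu
  set v : H := B ψ - (d : ℂ) • ψ with hv
  set g : H := (a : ℂ)⁻¹ • u - ((s : ℂ) * Complex.I * (b : ℂ)⁻¹) • v with hg
  have ha0 : (a : ℝ) ≠ 0 := ne_of_gt hΔA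
  have hb0 : (b : ℝ) ≠ 0 := ne_of_gt hΔB
  -- the inner product in the goal equals ⟪g, ψperp⟫
  have hT : ⟪ψ, (((a : ℂ))⁻¹ • A + ((s : ℂ) * Complex.I * ((b : ℂ))⁻¹) • B) ψperp⟫
      = ⟪g, ψperp⟫ := by
    have e1 : ⟪ψ, A ψperp⟫ = ⟪A ψ, ψperp⟫ := (hA ψ ψperp).symm
    have e2 : ⟪ψ, B ψperp⟫ = ⟪B ψ, ψperp⟫ := (hB ψ ψperp).symm
    simp [hg, hu, hv, inner_sub_left, inner_smul_left, inner_smul_right, inner_add_right,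
      LinearMap.add_apply, LinearMap.smul_apply, hperp, e1, e2, map_mul, map_inv₀, aux_real_smul_inner_left, aux_real_smul_inner_right, smul_eq_mul,
      Complex.conj_ofReal, Complex.conj_I]
    ring
  -- norm of g squared
  have hgg : (⟪g, g⟫).re * (a * b) = 2 * (a * b) - s * commRe ψ A B := by
    have expand : ⟪g, g⟫ =
        ((a : ℂ))⁻¹ * (a : ℂ)⁻¹ * ((a ^ 2 + c ^ 2 : ℝ) - (c:ℂ)*c - (c:ℂ)*c + (c:ℂ)*c)
        + ((s:ℂ)^2 * (b:ℂ)⁻¹ * (b:ℂ)⁻¹) * ((b ^ 2 + d ^ 2 : ℝ) - (d:ℂ)*d - (d:ℂ)*d + (d:ℂ)*d)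
        - ((s:ℂ) * Complex.I * ((a:ℂ)⁻¹ * (b:ℂ)⁻¹)) * ((p - (c:ℂ)*d - (c:ℂ)*d + (c:ℂ)*d)
            - ((starRingEnd ℂ) p - (c:ℂ)*d - (c:ℂ)*d + (c:ℂ)*d)) := by
      simp only [hg, hu, hv, inner_sub_left, inner_sub_right, inner_smul_left, inner_smul_right,
        hψ1, hAψ, hBψ, hAψ', hBψ', hAA, hBB, hBA, map_mul, map_inv₀, aux_real_smul_inner_left, aux_real_smul_inner_right, smul_eq_mul,
        Complex.conj_ofReal, Complex.conj_I, ← hp]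
      ring_nf
      simp only [Complex.I_sq]
      ring
    rw [hcomm, expand]
    have hsub : p - (starRingEnd ℂ) p = (2 * p.im : ℝ) * Complex.I := Complex.sub_conj p
    rw [show (p - (c:ℂ)*d - (c:ℂ)*d + (c:ℂ)*d) - ((starRingEnd ℂ) p - (c:ℂ)*d - (c:ℂ)*d + (c:ℂ)*d)
        = p - (starRingEnd ℂ) p by ring, hsub]
    have : ((s:ℂ) = (s:ℝ)) := rfl
    push_cast
    simp [Complex.add_re, Complex.sub_re, Complex.mul_re, Complex.mul_im,
      Complex.I_re, Complex.I_im, Complex.ofReal_re, Complex.ofReal_im,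
      Complex.inv_re, Complex.inv_im, Complex.normSq_ofReal]
    field_simp
    ring_nf
    simp only [← Complex.ofReal_pow, Complex.ofReal_re, Complex.ofReal_im]
    ring_nf
    linear_combination (a ^ 2 * b ^ 2) * hs2
  have hCS : ‖⟪g, ψperp⟫‖ ≤ ‖g‖ := by
    have := norm_inner_le_norm (𝕜 := ℂ) g ψperp
    simpa [hperpunit] using this
  have hab : (0:ℝ) < a * b := mul_pos hΔA hΔB
  have hng : ‖g‖ ^ 2 = (⟪g, g⟫).re := by
    simpa using norm_sq_eq_re_inner (𝕜 := ℂ) g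
  have hT2 : ‖⟪g, ψperp⟫‖ ^ 2 * (a * b) ≤ 2 * (a * b) - s * commRe ψ A B := by
    have h1 : ‖⟪g, ψperp⟫‖ ^ 2 ≤ ‖g‖ ^ 2 := by
      apply pow_le_pow_left₀ (norm_nonneg _) hCS
    rw [hng] at h1
    calc ‖⟪g, ψperp⟫‖ ^ 2 * (a * b) ≤ (⟪g, g⟫).re * (a * b) := by
          exact mul_le_mul_of_nonneg_right h1 hab.le
      _ = 2 * (a * b) - s * commRe ψ A B := hgg
  rw [hT]
  nlinarith [hT2, hab, sq_nonneg (‖⟪g, ψperp⟫‖)]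
end
end

section
/- Fix a sign s ∈ {+1, −1}, let Π = I − |ψ⟩⟨ψ|, and suppose the vector v = Π (A − s·i·B) ψ is nonzero. Then with the choice ψ⊥ = v/‖v‖ (which is a unit vector orthogonal to ψ), the Maccone–Pati sum uncertainty relation is saturated: ΔA² + ΔB² = s·i⟨[A,B]⟩ + |⟪ψ, (A + s·i·B) ψ⊥⟫|². -/
open scoped ComplexInnerProductSpace BigOperators

noncomputable section

variable {H : Type*} [NormedAddCommGroup H] [InnerProductSpace ℂ H]

theorem maccone_pati_saturation
    {H : Type*} [NormedAddCommGroup H] [InnerProductSpace ℂ H] [FiniteDimensional ℂ H]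
    (A B : H →ₗ[ℂ] H) (hA : A.IsSymmetric) (hB : B.IsSymmetric)
    (ψ : H) (hψ : ‖ψ‖ = 1)
    (s : ℝ) (hs : s = 1 ∨ s = -1)
    (v : H) (hvdef : v = projPerp ψ ((A - ((s : ℂ) * Complex.I) • B) ψ)) (hv : v ≠ 0)
    (ψperp : H) (hperpdef : ψperp = ((‖v‖ : ℂ))⁻¹ • v) :
    ‖ψperp‖ = 1 ∧ ⟪ψ, ψperp⟫ = 0 ∧
      varOf ψ A + varOf ψ B
        = s * commRe ψ A B + ‖⟪ψ, (A + ((s : ℂ) * Complex.I) • B) ψperp⟫‖ ^ 2 := by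
  have hψψ : (⟪ψ, ψ⟫ : ℂ) = 1 := by
    rw [inner_self_eq_norm_sq_to_K, hψ]; norm_num
  set u : H := (A - ((s:ℂ) * Complex.I) • B) ψ with hu
  have hvu : v = u - ⟪ψ, u⟫ • ψ := by
    rw [hvdef]; simp [projPerp]
  have hψv : ⟪ψ, v⟫ = 0 := by
    rw [hvu]; simp [inner_sub_right, inner_smul_right, hψψ, hψ]
  have hnv : ‖v‖ ≠ 0 := norm_ne_zero_iff.mpr hv
  have hnvC : ((‖v‖ : ℂ)) ≠ 0 := by exact_mod_cast hnv
  refine ⟨?_, ?_, ?_⟩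
  · rw [hperpdef, norm_smul]
    simp [hnv]
  · rw [hperpdef, inner_smul_right, hψv, mul_zero]
  · have huv : ⟪v, v⟫ = ⟪u, v⟫ := by
      nth_rewrite 1 [hvu]
      rw [inner_sub_left, inner_smul_left, hψv, mul_zero, sub_zero]
    have hsymm : ⟪ψ, (A + ((s:ℂ)*Complex.I) • B) ψperp⟫ = ⟪u, ψperp⟫ := by
      simp only [LinearMap.add_apply, LinearMap.smul_apply, hu, LinearMap.sub_apply,
        inner_add_right, inner_smul_right, inner_sub_left, inner_smul_left,
        map_mul, Complex.conj_I, Complex.conj_ofReal]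
      rw [← hA ψ ψperp, ← hB ψ ψperp]
      ring
    have hkey : ⟪ψ, (A + ((s:ℂ)*Complex.I) • B) ψperp⟫ = (‖v‖ : ℂ) := by
      rw [hsymm, hperpdef, inner_smul_right, ← huv, inner_self_eq_norm_sq_to_K]
      change ((‖v‖ : ℂ))⁻¹ * ((‖v‖ : ℂ)) ^ 2 = (‖v‖ : ℂ)
      rw [pow_two, ← mul_assoc, inv_mul_cancel₀ hnvC, one_mul]
    rw [hkey]
    have hnorm : ‖((‖v‖ : ℂ))‖ ^ 2 = (⟪v, v⟫ : ℂ).re := by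
      have h2 : (⟪v,v⟫:ℂ) = ((‖v‖^2 : ℝ) : ℂ) := by
        rw [inner_self_eq_norm_sq_to_K]; norm_cast
      rw [h2, Complex.ofReal_re, Complex.norm_real, Real.norm_eq_abs, abs_norm]
    rw [hnorm, huv, hvu]
    simp only [hu, LinearMap.sub_apply, LinearMap.smul_apply, LinearMap.id_apply,
      inner_sub_left, inner_sub_right, inner_smul_left, inner_smul_right,
      map_mul, Complex.conj_I, Complex.conj_ofReal, map_sub,
      hA ψ (B ψ), hB ψ (A ψ), hA ψ (A ψ), hB ψ (B ψ), hA ψ ψ, hB ψ ψ, hψψ,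
      varOf, expVal, commRe, LinearMap.comp_apply]
    have ha : (⟪ψ, A ψ⟫ : ℂ).im = 0 := by
      rw [← Complex.conj_eq_iff_im, inner_conj_symm, hA ψ ψ]
    have hb : (⟪ψ, B ψ⟫ : ℂ).im = 0 := by
      rw [← Complex.conj_eq_iff_im, inner_conj_symm, hB ψ ψ]
    have hcab : (starRingEnd ℂ) ⟪ψ, A (B ψ)⟫ = ⟪ψ, B (A ψ)⟫ := by
      rw [inner_conj_symm, hA (B ψ) ψ, hB ψ (A ψ)]
    have hre : (⟪ψ, B (A ψ)⟫ : ℂ).re = (⟪ψ, A (B ψ)⟫ : ℂ).re := by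
      rw [← hcab, Complex.conj_re]
    have him : (⟪ψ, B (A ψ)⟫ : ℂ).im = -(⟪ψ, A (B ψ)⟫ : ℂ).im := by
      rw [← hcab, Complex.conj_im]
    rcases hs with rfl | rfl <;>
      · simp only [Complex.ofReal_one, Complex.ofReal_neg, one_mul, neg_mul, one_smul]
        simp only [Complex.sub_re, Complex.add_re, Complex.neg_re, Complex.mul_re,
          Complex.mul_im, Complex.sub_im, Complex.add_im, Complex.neg_im,
          Complex.I_re, Complex.I_im, ha, hb, hre, him]
        ring
end
end

section
/- (Vaidman's formula.) If ΔA > 0, then there exists a unit vector ψ⊥ ∈ H with ⟪ψ, ψ⊥⟫ = 0 such that A ψ = ⟨A⟩ ψ + ΔA · ψ⊥. -/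
open scoped ComplexInnerProductSpace BigOperators

noncomputable section

variable {H : Type*} [NormedAddCommGroup H] [InnerProductSpace ℂ H]

theorem vaidman_formula
    {H : Type*} [NormedAddCommGroup H] [InnerProductSpace ℂ H] [FiniteDimensional ℂ H]
    (A : H →ₗ[ℂ] H) (hA : A.IsSymmetric)
    (ψ : H) (hψ : ‖ψ‖ = 1)
    (hΔA : 0 < stdDev ψ A) :
    ∃ ψperp : H, ‖ψperp‖ = 1 ∧ ⟪ψ, ψperp⟫ = 0 ∧
      A ψ = (expVal ψ A : ℂ) • ψ + (stdDev ψ A : ℂ) • ψperp := by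
  set a : ℝ := expVal ψ A with ha
  set φ : H := A ψ - (a : ℂ) • ψ with hφ
  have hψ2 : ⟪ψ, ψ⟫ = 1 := by
    rw [inner_self_eq_norm_sq_to_K, hψ]; norm_num
  have hAψψ : ⟪ψ, A ψ⟫ = (a : ℂ) := by
    have hc : (starRingEnd ℂ) ⟪ψ, A ψ⟫ = ⟪ψ, A ψ⟫ := by
      rw [inner_conj_symm]; exact hA ψ ψ
    rw [Complex.conj_eq_iff_re] at hc
    rw [← hc]; rfl
  have hAψψ' : ⟪A ψ, ψ⟫ = (a : ℂ) := by rw [hA]; exact hAψψ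
  have hperp : ⟪ψ, φ⟫ = 0 := by
    rw [hφ, inner_sub_right, inner_smul_right, hAψψ, hψ2, mul_one, sub_self]
  have hAAψ : ⟪A ψ, A ψ⟫ = ⟪ψ, A (A ψ)⟫ := hA ψ (A ψ)
  have hnorm2 : (⟪φ, φ⟫ : ℂ) = ((varOf ψ A : ℝ) : ℂ) := by
    have hvar : ⟪ψ, A (A ψ)⟫ = ((⟪ψ, A (A ψ)⟫.re : ℝ) : ℂ) := by
      have hc : (starRingEnd ℂ) ⟪ψ, A (A ψ)⟫ = ⟪ψ, A (A ψ)⟫ := by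
        rw [inner_conj_symm]; exact (hA (A ψ) ψ).trans hAAψ
      rw [Complex.conj_eq_iff_re] at hc
      exact hc.symm
    simp only [hφ, inner_sub_left, inner_sub_right, inner_smul_left, inner_smul_right,
      hAψψ, hAψψ', hψ2, ← hAAψ, Complex.conj_ofReal]
    rw [hAAψ, hvar]
    simp [varOf, ← ha]
    ring
  have hnφ : ‖φ‖ = stdDev ψ A := by
    have h1 : (⟪φ, φ⟫ : ℂ).re = varOf ψ A := by rw [hnorm2]; simp
    have h2 : ‖φ‖ ^ 2 = varOf ψ A := by
      rw [← h1, ← inner_self_eq_norm_sq (𝕜 := ℂ)]; rfl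
    rw [stdDev, ← h2, Real.sqrt_sq (norm_nonneg φ)]
  have hφne : φ ≠ 0 := by
    intro h
    rw [h, norm_zero] at hnφ
    exact absurd hnφ.symm (ne_of_gt hΔA)
  refine ⟨(‖φ‖⁻¹ : ℂ) • φ, ?_, ?_, ?_⟩
  · rw [norm_smul]
    simp [norm_ne_zero_iff.mpr hφne, inv_mul_cancel₀ (norm_ne_zero_iff.mpr hφne)]
  · rw [inner_smul_right, hperp, mul_zero]
  · rw [smul_smul, ← hnφ]
    rw [mul_inv_cancel₀ (by exact_mod_cast norm_ne_zero_iff.mpr hφne), one_smul]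
    rw [hφ]; abel
end
end

section
/- (Generalized intelligent states.) Let γ ∈ ℂ and suppose ((A − ⟨A⟩I) + i·γ·(B − ⟨B⟩I)) ψ = 0, i.e. ψ satisfies the eigenvalue equation (A + iγB)ψ = (⟨A⟩ + iγ⟨B⟩)ψ. If ΔB > 0, then γ = (⟨C⟩ + i⟨F⟩)/(2ΔB²) and |γ|² = ΔA²/ΔB², where C = −i[A,B] and F = (A − ⟨A⟩I)(B − ⟨B⟩I) + (B − ⟨B⟩I)(A − ⟨A⟩I) are self-adjoint operators. -/
open scoped ComplexInnerProductSpace BigOperators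

noncomputable section

variable {H : Type*} [NormedAddCommGroup H] [InnerProductSpace ℂ H]

theorem generalized_intelligent_state
    {H : Type*} [NormedAddCommGroup H] [InnerProductSpace ℂ H] [FiniteDimensional ℂ H]
    (A B : H →ₗ[ℂ] H) (hA : A.IsSymmetric) (hB : B.IsSymmetric)
    (ψ : H) (hψ : ‖ψ‖ = 1)
    (γ : ℂ) (hγ : (devOp ψ A + (Complex.I * γ) • devOp ψ B) ψ = 0)
    (hΔB : 0 < stdDev ψ B) :
    γ = ((expVal ψ (opC A B) : ℂ) + Complex.I * (expVal ψ (opF ψ A B) : ℂ))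
          / (2 * (varOf ψ B : ℂ))
      ∧ ‖γ‖ ^ 2 = varOf ψ A / varOf ψ B := by

  have hψ1 : ⟪ψ, ψ⟫ = (1:ℂ) := by
    rw [inner_self_eq_norm_sq_to_K, hψ]; norm_num
  set a := expVal ψ A with ha
  set b := expVal ψ B with hb
  set V := devOp ψ A ψ with hVdef
  set W := devOp ψ B ψ with hWdef
  have hAψ : A ψ = V + (a:ℂ) • ψ := by simp [hVdef, devOp, ha]
  have hBψ : B ψ = W + (b:ℂ) • ψ := by simp [hWdef, devOp, hb]
  have hVeq : V = A ψ - (a:ℂ) • ψ := by rw [hAψ]; abel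
  have hWeq : W = B ψ - (b:ℂ) • ψ := by rw [hBψ]; abel
  -- expectation values are real
  have hAr : ⟪ψ, A ψ⟫ = (a:ℂ) := by
    have h1 : (starRingEnd ℂ) ⟪ψ, A ψ⟫ = ⟪ψ, A ψ⟫ := by
      rw [inner_conj_symm]; exact hA ψ ψ
    have h2 := Complex.conj_eq_iff_re.mp h1
    rw [← h2]; rfl
  have hBr : ⟪ψ, B ψ⟫ = (b:ℂ) := by
    have h1 : (starRingEnd ℂ) ⟪ψ, B ψ⟫ = ⟪ψ, B ψ⟫ := by
      rw [inner_conj_symm]; exact hB ψ ψ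
    have h2 := Complex.conj_eq_iff_re.mp h1
    rw [← h2]; rfl
  have hψV : ⟪ψ, V⟫ = 0 := by
    rw [hVeq, inner_sub_right, inner_smul_right, hAr, hψ1]; ring
  have hψW : ⟪ψ, W⟫ = 0 := by
    rw [hWeq, inner_sub_right, inner_smul_right, hBr, hψ1]; ring
  have hVψ : ⟪V, ψ⟫ = 0 := by
    rw [← inner_conj_symm, hψV]; simp
  have hWψ : ⟪W, ψ⟫ = 0 := by
    rw [← inner_conj_symm, hψW]; simp
  -- the eigenvalue relation
  have hVW : V = (-(Complex.I * γ)) • W := by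
    have h := hγ
    simp only [LinearMap.add_apply, LinearMap.smul_apply, ← hVdef, ← hWdef] at h
    rw [neg_smul]
    exact eq_neg_of_add_eq_zero_left h
  -- variances as norms of deviation vectors
  have hWW : ⟪W, W⟫ = ((varOf ψ B : ℝ) : ℂ) := by
    have hBB : ⟪B ψ, B ψ⟫ = ⟪W, W⟫ + (b:ℂ)^2 := by
      rw [hBψ]
      simp only [inner_add_left, inner_add_right, inner_smul_left, inner_smul_right,
        hψW, hWψ, hψ1, Complex.conj_ofReal]
      ring
    have h1 : ⟪ψ, B (B ψ)⟫ = ⟪W, W⟫ + (b:ℂ)^2 := by rw [← hB ψ (B ψ)]; exact hBB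
    have h3 : ⟪W, W⟫ = ((‖W‖^2 : ℝ) : ℂ) := by
      rw [inner_self_eq_norm_sq_to_K]; norm_cast
    have h1' : ⟪ψ, B (B ψ)⟫ = ((‖W‖^2 + b^2 : ℝ) : ℂ) := by
      rw [h1, h3]; push_cast; ring
    have h4 : varOf ψ B = ‖W‖^2 := by
      simp only [varOf, ← hb, h1', Complex.ofReal_re]; ring
    rw [h4, ← h3]
  have hVV : ⟪V, V⟫ = ((varOf ψ A : ℝ) : ℂ) := by
    have hAA : ⟪A ψ, A ψ⟫ = ⟪V, V⟫ + (a:ℂ)^2 := by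
      rw [hAψ]
      simp only [inner_add_left, inner_add_right, inner_smul_left, inner_smul_right,
        hψV, hVψ, hψ1, Complex.conj_ofReal]
      ring
    have h1 : ⟪ψ, A (A ψ)⟫ = ⟪V, V⟫ + (a:ℂ)^2 := by rw [← hA ψ (A ψ)]; exact hAA
    have h3 : ⟪V, V⟫ = ((‖V‖^2 : ℝ) : ℂ) := by
      rw [inner_self_eq_norm_sq_to_K]; norm_cast
    have h1' : ⟪ψ, A (A ψ)⟫ = ((‖V‖^2 + a^2 : ℝ) : ℂ) := by
      rw [h1, h3]; push_cast; ring
    have h4 : varOf ψ A = ‖V‖^2 := by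
      simp only [varOf, ← ha, h1', Complex.ofReal_re]; ring
    rw [h4, ← h3]
  -- the key inner product
  have hz : ⟪V, W⟫ = Complex.I * (starRingEnd ℂ) γ * ((varOf ψ B : ℝ) : ℂ) := by
    rw [hVW, inner_smul_left, hWW]
    simp [Complex.conj_I]
  have hwv : ⟪W, V⟫ = (starRingEnd ℂ) ⟪V, W⟫ := (inner_conj_symm W V).symm
  -- cross expectation values
  have hAB : ⟪ψ, A (B ψ)⟫ = ⟪V, W⟫ + (a:ℂ) * (b:ℂ) := by
    rw [← hA ψ (B ψ), hAψ, hBψ]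
    simp only [inner_add_left, inner_add_right, inner_smul_left, inner_smul_right,
      hψV, hψW, hVψ, hWψ, hψ1, Complex.conj_ofReal]
    ring
  have hBA : ⟪ψ, B (A ψ)⟫ = ⟪W, V⟫ + (a:ℂ) * (b:ℂ) := by
    rw [← hB ψ (A ψ), hAψ, hBψ]
    simp only [inner_add_left, inner_add_right, inner_smul_left, inner_smul_right,
      hψV, hψW, hVψ, hWψ, hψ1, Complex.conj_ofReal]
    ring
  set t : ℝ := varOf ψ B with htdef
  -- value of ⟨C⟩
  have hCinner : ⟪ψ, opC A B ψ⟫ = ((2 * γ.re * t : ℝ) : ℂ) := by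
    have h0 : opC A B ψ = (-Complex.I) • (A (B ψ) - B (A ψ)) := rfl
    rw [h0, inner_smul_right, inner_sub_right, hAB, hBA, hwv, hz]
    simp only [map_mul, Complex.conj_I, Complex.conj_conj, Complex.conj_ofReal]
    have hac : γ + (starRingEnd ℂ) γ = 2 * (γ.re:ℂ) := by
      rw [Complex.add_conj]; push_cast; ring
    push_cast
    linear_combination (-(t:ℂ)) * (γ + (starRingEnd ℂ) γ) * Complex.I_sq
      + (t:ℂ) * hac
  have hCval : (expVal ψ (opC A B) : ℂ) = 2 * (γ.re : ℂ) * (t : ℂ) := by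
    have : expVal ψ (opC A B) = 2 * γ.re * t := by
      rw [expVal, hCinner, Complex.ofReal_re]
    rw [this]; push_cast; ring
  -- value of ⟨F⟩
  have hsymA : ∀ x y : H, ⟪devOp ψ A x, y⟫ = ⟪x, devOp ψ A y⟫ := by
    intro x y
    simp only [devOp, LinearMap.sub_apply, LinearMap.smul_apply, LinearMap.id_coe, id_eq,
      inner_sub_left, inner_sub_right, inner_smul_left, inner_smul_right,
      Complex.conj_ofReal, hA x y]
  have hsymB : ∀ x y : H, ⟪devOp ψ B x, y⟫ = ⟪x, devOp ψ B y⟫ := by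
    intro x y
    simp only [devOp, LinearMap.sub_apply, LinearMap.smul_apply, LinearMap.id_coe, id_eq,
      inner_sub_left, inner_sub_right, inner_smul_left, inner_smul_right,
      Complex.conj_ofReal, hB x y]
  have hFinner : ⟪ψ, opF ψ A B ψ⟫ = ((2 * γ.im * t : ℝ) : ℂ) := by
    have h0 : opF ψ A B ψ = devOp ψ A (devOp ψ B ψ) + devOp ψ B (devOp ψ A ψ) := rfl
    rw [h0, inner_add_right, ← hsymA ψ (devOp ψ B ψ), ← hsymB ψ (devOp ψ A ψ),
      ← hVdef, ← hWdef, hwv, hz]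
    simp only [map_mul, Complex.conj_I, Complex.conj_conj, Complex.conj_ofReal]
    have hsc : γ - (starRingEnd ℂ) γ = 2 * (γ.im:ℂ) * Complex.I := by
      rw [Complex.sub_conj]; push_cast; ring
    push_cast
    linear_combination (-(t:ℂ) * Complex.I) * hsc
      + (-2*(γ.im:ℂ)*(t:ℂ)) * Complex.I_sq
  have hFval : (expVal ψ (opF ψ A B) : ℂ) = 2 * (γ.im : ℂ) * (t : ℂ) := by
    have : expVal ψ (opF ψ A B) = 2 * γ.im * t := by
      rw [expVal, hFinner, Complex.ofReal_re]
    rw [this]; push_cast; ring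
  -- positivity of the variance
  have htpos : 0 < t := by
    have := hΔB
    rw [stdDev] at this
    exact Real.sqrt_pos.mp this
  have ht0 : (t : ℂ) ≠ 0 := by exact_mod_cast ne_of_gt htpos
  constructor
  · rw [hCval, hFval]
    field_simp
    linear_combination (-1:ℂ) * Complex.re_add_im γ
  · -- |γ|² = ΔA²/ΔB²
    have hVVγ : ((varOf ψ A : ℝ) : ℂ) = ((‖γ‖ ^ 2 : ℝ) : ℂ) * ((t : ℝ) : ℂ) := by
      have habs : ((‖γ‖ ^ 2 : ℝ) : ℂ) = γ * (starRingEnd ℂ) γ := by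
        rw [Complex.sq_norm, ← Complex.mul_conj]
      rw [← hVV, hVW, inner_smul_left, inner_smul_right, hWW]
      simp only [map_neg, map_mul, Complex.conj_I]
      linear_combination (-(γ * (starRingEnd ℂ) γ * (t:ℂ))) * Complex.I_sq
        + (-(t:ℂ)) * habs
    have hreal : varOf ψ A = ‖γ‖ ^ 2 * t := by
      exact_mod_cast hVVγ
    rw [hreal]
    field_simp
end
end

section
/- (Ordinary intelligent states saturate the Robertson relation.) Let γ be a nonzero real number and suppose ((A − ⟨A⟩I) + i·γ·(B − ⟨B⟩I)) ψ = 0, with ΔB > 0. Then ⟨F⟩ = 0, γ = ⟨C⟩/(2ΔB²), |γ| = ΔA/ΔB, and ΔA·ΔB = |⟨C⟩|/2, where C = −i[A,B] and F = (A − ⟨A⟩I)(B − ⟨B⟩I) + (B − ⟨B⟩I)(A − ⟨A⟩I). -/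
open scoped ComplexInnerProductSpace BigOperators

noncomputable section

variable {H : Type*} [NormedAddCommGroup H] [InnerProductSpace ℂ H]

lemma devOp_isSymm (ψ : H) (A : H →ₗ[ℂ] H) (hA : A.IsSymmetric) :
    (devOp ψ A).IsSymmetric := by
  intro x y
  simp only [devOp, LinearMap.sub_apply, LinearMap.smul_apply, LinearMap.id_apply,
    inner_sub_left, inner_sub_right, inner_smul_left, inner_smul_right,
    Complex.conj_ofReal, hA x y]

lemma var_eq_norm_sq (ψ : H) (hψ : ‖ψ‖ = 1) (A : H →ₗ[ℂ] H) (hA : A.IsSymmetric) :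
    varOf ψ A = ‖devOp ψ A ψ‖ ^ 2 := by
  set c : ℝ := expVal ψ A with hc
  have h1 : devOp ψ A ψ = A ψ - (c : ℂ) • ψ := by
    simp [devOp, hc]
  rw [varOf, h1, @norm_sub_sq ℂ]
  have h2 : ⟪A ψ, (c:ℂ) • ψ⟫ = (c : ℂ) * ⟪ψ, A ψ⟫ := by
    rw [inner_smul_right, ← hA]
  have h3 : ‖A ψ‖ ^ 2 = (⟪ψ, A (A ψ)⟫).re := by
    rw [← hA, ← @inner_self_eq_norm_sq ℂ]; rfl
  have h4 : ‖(c:ℂ) • ψ‖ ^ 2 = c ^ 2 := by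
    simp [norm_smul, hψ, sq_abs]
  rw [h3, h2, h4]
  simp only [RCLike.re_to_complex, Complex.mul_re, Complex.ofReal_re, Complex.ofReal_im]
  have : (⟪ψ, A ψ⟫).re = c := rfl
  rw [this]
  ring

theorem ordinary_intelligent_state_saturates_robertson
    {H : Type*} [NormedAddCommGroup H] [InnerProductSpace ℂ H] [FiniteDimensional ℂ H]
    (A B : H →ₗ[ℂ] H) (hA : A.IsSymmetric) (hB : B.IsSymmetric)
    (ψ : H) (hψ : ‖ψ‖ = 1)
    (γ : ℝ) (hγ0 : γ ≠ 0)
    (hγ : (devOp ψ A + (Complex.I * (γ : ℂ)) • devOp ψ B) ψ = 0)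
    (hΔB : 0 < stdDev ψ B) :
    expVal ψ (opF ψ A B) = 0
      ∧ γ = expVal ψ (opC A B) / (2 * varOf ψ B)
      ∧ |γ| = stdDev ψ A / stdDev ψ B
      ∧ stdDev ψ A * stdDev ψ B = |expVal ψ (opC A B)| / 2 := by
  have hsA := devOp_isSymm ψ A hA
  have hsB := devOp_isSymm ψ B hB
  set a := devOp ψ A ψ with ha
  set b := devOp ψ B ψ with hb
  have hab : a = (-(Complex.I * γ)) • b := by
    have h := hγ
    simp only [LinearMap.add_apply, LinearMap.smul_apply, ← ha, ← hb] at h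
    rw [neg_smul]
    exact eq_neg_of_add_eq_zero_left h
  have hvB : varOf ψ B = ‖b‖ ^ 2 := var_eq_norm_sq ψ hψ B hB
  have hvA : varOf ψ A = ‖a‖ ^ 2 := var_eq_norm_sq ψ hψ A hA
  have hvBpos : 0 < varOf ψ B := Real.sqrt_pos.mp hΔB
  have hbpos : 0 < ‖b‖ := by
    rw [hvB] at hvBpos; nlinarith [norm_nonneg b]
  have hna : ‖a‖ = |γ| * ‖b‖ := by
    rw [hab, norm_smul, norm_neg, norm_mul, Complex.norm_I, one_mul, Complex.norm_real,
      Real.norm_eq_abs]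
  have hiab : ⟪a, b⟫ = Complex.I * γ * ((‖b‖ ^ 2 : ℝ) : ℂ) := by
    rw [hab, inner_smul_left, inner_self_eq_norm_sq_to_K, map_neg, map_mul,
      Complex.conj_I, Complex.conj_ofReal]
    push_cast
    ring_nf
    rfl
  have hiba : ⟪b, a⟫ = -(Complex.I * γ) * ((‖b‖ ^ 2 : ℝ) : ℂ) := by
    rw [hab, inner_smul_right, inner_self_eq_norm_sq_to_K]
    push_cast
    ring_nf
    rfl
  have hF : ⟪ψ, (opF ψ A B) ψ⟫ = ⟪a, b⟫ + ⟪b, a⟫ := by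
    simp only [opF, LinearMap.add_apply, LinearMap.comp_apply, inner_add_right]
    rw [← hsA ψ (devOp ψ B ψ), ← hsB ψ (devOp ψ A ψ)]
  have hFval : expVal ψ (opF ψ A B) = 0 := by
    rw [expVal, hF, hiab, hiba]
    ring_nf
    simp
  have hcommψ : (A ∘ₗ B - B ∘ₗ A) ψ = devOp ψ A (devOp ψ B ψ) - devOp ψ B (devOp ψ A ψ) := by
    simp only [devOp, LinearMap.sub_apply, LinearMap.comp_apply, LinearMap.smul_apply,
      LinearMap.id_apply, map_sub, map_smul]
    module
  have hC : ⟪ψ, (opC A B) ψ⟫ = -Complex.I * (⟪a, b⟫ - ⟪b, a⟫) := by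
    simp only [opC, LinearMap.smul_apply, inner_smul_right, hcommψ, inner_sub_right]
    rw [← hsA ψ (devOp ψ B ψ), ← hsB ψ (devOp ψ A ψ)]
    try ring
  have hCval : expVal ψ (opC A B) = 2 * γ * varOf ψ B := by
    rw [expVal, hC, hiab, hiba, hvB]
    simp only [Complex.mul_re, Complex.mul_im, Complex.neg_re, Complex.neg_im,
      Complex.I_re, Complex.I_im, Complex.ofReal_re, Complex.ofReal_im,
      Complex.sub_re, Complex.sub_im]
    ring
  have hΔBval : stdDev ψ B = ‖b‖ := by
    rw [stdDev, hvB, Real.sqrt_sq (norm_nonneg b)]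
  have hΔAval : stdDev ψ A = |γ| * ‖b‖ := by
    rw [stdDev, hvA, hna, Real.sqrt_sq (by positivity)]
  refine ⟨hFval, ?_, ?_, ?_⟩
  · rw [hCval]
    field_simp
  · rw [hΔAval, hΔBval]
    field_simp
  · rw [hΔAval, hΔBval, hCval, hvB, abs_mul, abs_mul]
    rw [abs_of_nonneg (by norm_num : (0:ℝ) ≤ 2), abs_of_nonneg (by positivity : (0:ℝ) ≤ ‖b‖^2)]
    ring
end
end

section
/- (Strengthened Schrödinger-type sum relation.) Let C = −i[A,B] and F = (A − ⟨A⟩I)(B − ⟨B⟩I) + (B − ⟨B⟩I)(A − ⟨A⟩I); suppose ⟨C⟩² + ⟨F⟩² > 0, and set z = (⟨C⟩ + i⟨F⟩)/√(⟨C⟩² + ⟨F⟩²) ∈ ℂ. Then for every unit vector ψ⊥ ∈ H with ⟪ψ, ψ⊥⟫ = 0, one has ΔA² + ΔB² ≥ √(⟨C⟩² + ⟨F⟩²) + |⟪ψ⊥, (A + i·z·B) ψ⟫|². -/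
open scoped ComplexInnerProductSpace BigOperators

noncomputable section

variable {H : Type*} [NormedAddCommGroup H] [InnerProductSpace ℂ H]

lemma devOp_apply' (ψ x : H) (A : H →ₗ[ℂ] H) :
    devOp ψ A x = A x - (expVal ψ A : ℂ) • x := rfl

lemma devOp_isSymmetric {A : H →ₗ[ℂ] H} (hA : A.IsSymmetric) (ψ : H) :
    (devOp ψ A).IsSymmetric := by
  intro x y
  simp only [devOp_apply', inner_sub_left, inner_sub_right, inner_smul_left,
    inner_smul_right, Complex.conj_ofReal, hA x y]

theorem strengthened_schrodinger_sum_relation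
    {H : Type*} [NormedAddCommGroup H] [InnerProductSpace ℂ H] [FiniteDimensional ℂ H]
    (A B : H →ₗ[ℂ] H) (hA : A.IsSymmetric) (hB : B.IsSymmetric)
    (ψ : H) (hψ : ‖ψ‖ = 1)
    (hpos : 0 < expVal ψ (opC A B) ^ 2 + expVal ψ (opF ψ A B) ^ 2)
    (z : ℂ)
    (hz : z = ((expVal ψ (opC A B) : ℂ) + Complex.I * (expVal ψ (opF ψ A B) : ℂ))
        / ((Real.sqrt (expVal ψ (opC A B) ^ 2 + expVal ψ (opF ψ A B) ^ 2) : ℝ) : ℂ))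
    (ψperp : H) (hperpunit : ‖ψperp‖ = 1) (hperp : ⟪ψ, ψperp⟫ = 0) :
    varOf ψ A + varOf ψ B
      ≥ Real.sqrt (expVal ψ (opC A B) ^ 2 + expVal ψ (opF ψ A B) ^ 2)
        + ‖⟪ψperp, (A + (Complex.I * z) • B) ψ⟫‖ ^ 2 := by
  set α : ℝ := expVal ψ A with hα
  set β : ℝ := expVal ψ B with hβ
  set u : H := devOp ψ A ψ with hu
  set v : H := devOp ψ B ψ with hv
  set c : ℂ := ⟪u, v⟫ with hcdef
  have hψψ : (⟪ψ, ψ⟫ : ℂ) = 1 := by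
    rw [inner_self_eq_norm_sq_to_K, hψ]; norm_num
  -- realness of expectation values
  have hreal : ∀ (T : H →ₗ[ℂ] H), T.IsSymmetric → (⟪ψ, T ψ⟫ : ℂ) = ((expVal ψ T : ℝ) : ℂ) := by
    intro T hT
    have h2 : (starRingEnd ℂ) ⟪ψ, T ψ⟫ = ⟪ψ, T ψ⟫ := by
      rw [inner_conj_symm, hT ψ ψ]
    rw [Complex.conj_eq_iff_re] at h2
    rw [← h2]; rfl
  have hψA : (⟪ψ, A ψ⟫ : ℂ) = (α : ℂ) := hreal A hA
  have hψB : (⟪ψ, B ψ⟫ : ℂ) = (β : ℂ) := hreal B hB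
  have hAψ : (⟪A ψ, ψ⟫ : ℂ) = (α : ℂ) := by rw [hA ψ ψ, hψA]
  have hBψ : (⟪B ψ, ψ⟫ : ℂ) = (β : ℂ) := by rw [hB ψ ψ, hψB]
  have hA' := devOp_isSymmetric hA ψ
  have hB' := devOp_isSymmetric hB ψ
  -- c = ⟪Aψ, Bψ⟫ - αβ
  have hc : c = ⟪A ψ, B ψ⟫ - ((α * β : ℝ) : ℂ) := by
    rw [hcdef, hu, hv, devOp_apply', devOp_apply', inner_sub_left, inner_sub_right,
      inner_sub_right, inner_smul_left, inner_smul_right, inner_smul_left,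
      inner_smul_right, hAψ, hψB, hψψ, Complex.conj_ofReal]
    push_cast
    ring
  -- expVal of F
  have hF : expVal ψ (opF ψ A B) = 2 * c.re := by
    have e1 : (⟪ψ, (devOp ψ A) ((devOp ψ B) ψ)⟫ : ℂ) = c := (hA' ψ _).symm
    have e2 : (⟪ψ, (devOp ψ B) ((devOp ψ A) ψ)⟫ : ℂ) = (starRingEnd ℂ) c := by
      rw [← hB' ψ (devOp ψ A ψ), ← inner_conj_symm]
    have : (⟪ψ, (opF ψ A B) ψ⟫ : ℂ) = c + (starRingEnd ℂ) c := by
      simp only [opF, LinearMap.add_apply, LinearMap.comp_apply, inner_add_right, e1, e2]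
    show (⟪ψ, (opF ψ A B) ψ⟫ : ℂ).re = 2 * c.re
    rw [this]
    simp [Complex.add_re, Complex.conj_re]
    ring
  -- expVal of C
  have hC : expVal ψ (opC A B) = 2 * c.im := by
    set d : ℂ := ⟪A ψ, B ψ⟫ with hd
    have e1 : (⟪ψ, A (B ψ)⟫ : ℂ) = d := (hA ψ _).symm
    have e2 : (⟪ψ, B (A ψ)⟫ : ℂ) = (starRingEnd ℂ) d := by
      rw [← hB ψ (A ψ), ← inner_conj_symm]
    have h3 : (⟪ψ, (opC A B) ψ⟫ : ℂ) = (-Complex.I) * (d - (starRingEnd ℂ) d) := by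
      simp only [opC, LinearMap.smul_apply, LinearMap.sub_apply, LinearMap.comp_apply,
        inner_smul_right, inner_sub_right, e1, e2]
    have h4 : c.im = d.im := by
      rw [hc]; simp
    show (⟪ψ, (opC A B) ψ⟫ : ℂ).re = 2 * c.im
    rw [h3, h4]
    simp [Complex.mul_re, Complex.sub_re, Complex.sub_im, Complex.conj_re, Complex.conj_im]
    ring
  -- the square root equals 2|c|
  have habs2 : ‖c‖ ^ 2 = c.re ^ 2 + c.im ^ 2 := by
    rw [Complex.sq_norm, Complex.normSq_apply]; ring
  have hr : Real.sqrt (expVal ψ (opC A B) ^ 2 + expVal ψ (opF ψ A B) ^ 2)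
      = 2 * ‖c‖ := by
    rw [hC, hF]
    have : (2 * c.im) ^ 2 + (2 * c.re) ^ 2 = (2 * ‖c‖) ^ 2 := by
      nlinarith [habs2]
    rw [this, Real.sqrt_sq (by positivity)]
  have hc0 : c ≠ 0 := by
    intro h
    rw [hC, hF, h] at hpos
    simp at hpos
  have habspos : 0 < ‖c‖ := norm_pos_iff.mpr hc0
  -- the key product identity
  have hz' : z = (((2 * c.im : ℝ) : ℂ) + Complex.I * ((2 * c.re : ℝ) : ℂ))
      / ((2 * ‖c‖ : ℝ) : ℂ) := by
    rw [hz, hr, hC, hF]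
  have hwc : Complex.I * z * c = -((‖c‖ : ℝ) : ℂ) := by
    rw [hz']
    have hne : ((2 * ‖c‖ : ℝ) : ℂ) ≠ 0 := by
      simp only [ne_eq, Complex.ofReal_eq_zero]
      positivity
    have habs2' : ((‖c‖ : ℝ) : ℂ) ^ 2 = (c.re : ℂ) ^ 2 + (c.im : ℂ) ^ 2 := by
      exact_mod_cast congrArg (fun x : ℝ => (x : ℂ)) habs2
    have e : c = (c.re : ℂ) + (c.im : ℂ) * Complex.I := (Complex.re_add_im c).symm
    rw [mul_div_assoc', div_mul_eq_mul_div, div_eq_iff hne]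
    push_cast
    linear_combination (Complex.I * (2 * (c.im:ℂ) + Complex.I * (2 * (c.re:ℂ)))) * e
      + (2 * (c.re:ℂ) * (c.im:ℂ) * Complex.I + 2 * (c.re:ℂ) ^ 2 + 2 * (c.im:ℂ) ^ 2)
        * Complex.I_sq
      + 2 * habs2'
  -- |I z| = 1
  have hzn : ‖Complex.I * z‖ = 1 := by
    have h := congrArg norm hwc
    rw [norm_neg, Complex.norm_real, Real.norm_eq_abs, abs_of_nonneg habspos.le, norm_mul] at h
    have h1 : ‖Complex.I * z‖ * ‖c‖ = 1 * ‖c‖ := by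
      rw [one_mul]; exact h
    exact mul_right_cancel₀ (ne_of_gt habspos) h1
  -- variances as norms
  have hvar : ∀ (T : H →ₗ[ℂ] H), T.IsSymmetric → varOf ψ T = ‖devOp ψ T ψ‖ ^ 2 := by
    intro T hT
    have hψT : (⟪ψ, T ψ⟫ : ℂ) = ((expVal ψ T : ℝ) : ℂ) := hreal T hT
    have hTψ : (⟪T ψ, ψ⟫ : ℂ) = ((expVal ψ T : ℝ) : ℂ) := by rw [hT ψ ψ, hψT]
    have h1 : (⟪devOp ψ T ψ, devOp ψ T ψ⟫ : ℂ)
        = ⟪ψ, T (T ψ)⟫ - ((expVal ψ T : ℝ) : ℂ) ^ 2 := by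
      rw [devOp_apply', inner_sub_left, inner_sub_right, inner_sub_right,
        inner_smul_left, inner_smul_right, inner_smul_left, inner_smul_right,
        hT ψ (T ψ), hTψ, hψT, hψψ, Complex.conj_ofReal]
      ring
    have h2 : (⟪devOp ψ T ψ, devOp ψ T ψ⟫ : ℂ).re = ‖devOp ψ T ψ‖ ^ 2 := by
      have h0 := inner_self_eq_norm_sq (𝕜 := ℂ) (devOp ψ T ψ)
      simpa using h0
    have h3 := congrArg Complex.re h1
    simp only [Complex.sub_re, ← Complex.ofReal_pow, Complex.ofReal_re] at h3
    rw [varOf, ← h2, h3]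
  have hvarA : varOf ψ A = ‖u‖ ^ 2 := hvar A hA
  have hvarB : varOf ψ B = ‖v‖ ^ 2 := hvar B hB
  -- the vector φ
  set φ : H := u + (Complex.I * z) • v with hφ
  have hnφ : ‖φ‖ ^ 2 = ‖u‖ ^ 2 + ‖v‖ ^ 2 - 2 * ‖c‖ := by
    rw [hφ, norm_add_sq (𝕜 := ℂ)]
    have e1 : (⟪u, (Complex.I * z) • v⟫ : ℂ) = Complex.I * z * c := by
      rw [inner_smul_right, hcdef]
    have e2 : RCLike.re (⟪u, (Complex.I * z) • v⟫ : ℂ) = -‖c‖ := by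
      rw [e1, hwc]; simp
    rw [e2, norm_smul, hzn]
    simp
    ring
  -- perpendicular inner product
  have hperp' : (⟪ψperp, ψ⟫ : ℂ) = 0 := by rw [← inner_conj_symm, hperp, map_zero]
  have h3 : (⟪ψperp, (A + (Complex.I * z) • B) ψ⟫ : ℂ) = ⟪ψperp, φ⟫ := by
    have hAψ' : A ψ = u + (α : ℂ) • ψ := by rw [hu, devOp_apply']; abel
    have hBψ' : B ψ = v + (β : ℂ) • ψ := by rw [hv, devOp_apply']; abel
    rw [LinearMap.add_apply, LinearMap.smul_apply, hAψ', hBψ', hφ]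
    rw [inner_add_right, inner_add_right, inner_smul_right, inner_add_right,
      inner_smul_right, inner_add_right, inner_smul_right, inner_smul_right, hperp']
    ring
  have h4 : ‖(⟪ψperp, φ⟫ : ℂ)‖ ≤ ‖φ‖ := by
    have := norm_inner_le_norm (𝕜 := ℂ) ψperp φ
    rwa [hperpunit, one_mul] at this
  have h5 : ‖(⟪ψperp, φ⟫ : ℂ)‖ ^ 2 ≤ ‖φ‖ ^ 2 := by
    have h6 : (0:ℝ) ≤ ‖(⟪ψperp, φ⟫ : ℂ)‖ := norm_nonneg _
    nlinarith
  rw [hr, hvarA, hvarB, h3]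
  nlinarith [hnφ, h5]
end
end

section
/- (Two-dimensional case: the Maccone–Pati relations become equalities.) Suppose dim H = 2 and let ψ⊥ be a unit vector orthogonal to ψ. Then for each sign s ∈ {+1, −1}: (i) ΔA² + ΔB² = s·i⟨[A,B]⟩ + |⟪ψ, (A + s·i·B) ψ⊥⟫|²; and (ii) if moreover ΔA > 0 and ΔB > 0, then ΔA·ΔB·(1 − (1/2)|⟪ψ, (A/ΔA + s·i·B/ΔB) ψ⊥⟫|²) = s·(i/2)⟨[A,B]⟩. -/
open scoped ComplexInnerProductSpace BigOperators

noncomputable section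

variable {H : Type*} [NormedAddCommGroup H] [InnerProductSpace ℂ H]

lemma decomp_two [FiniteDimensional ℂ H] (hdim : Module.finrank ℂ H = 2)
    (ψ ψp : H) (hψ : ‖ψ‖ = 1) (hp : ‖ψp‖ = 1) (ho : ⟪ψ, ψp⟫ = 0) (v : H) :
    v = ⟪ψ, v⟫ • ψ + ⟪ψp, v⟫ • ψp := by
  classical
  set f : Fin 2 → H := ![ψ, ψp] with hf
  have hon : Orthonormal ℂ f := by
    rw [orthonormal_iff_ite]
    intro i j
    fin_cases i <;> fin_cases j <;>
      simp [f, ho, ← inner_conj_symm ψp ψ,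
        inner_self_eq_norm_sq_to_K, hψ, hp]
  have hsp : ⊤ ≤ Submodule.span ℂ (Set.range f) := by
    rw [hon.linearIndependent.span_eq_top_of_card_eq_finrank (by simp [hdim])]
  let b : OrthonormalBasis (Fin 2) ℂ H := OrthonormalBasis.mk hon hsp
  have := b.sum_repr' v
  rw [show ⇑b = f from OrthonormalBasis.coe_mk hon hsp] at this
  rw [Fin.sum_univ_two] at this
  simpa [f] using this.symm

theorem qubit_maccone_pati_equalities
    {H : Type*} [NormedAddCommGroup H] [InnerProductSpace ℂ H] [FiniteDimensional ℂ H]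
    (A B : H →ₗ[ℂ] H) (hA : A.IsSymmetric) (hB : B.IsSymmetric)
    (ψ : H) (hψ : ‖ψ‖ = 1)
    (hdim : Module.finrank ℂ H = 2)
    (ψperp : H) (hperpunit : ‖ψperp‖ = 1) (hperp : ⟪ψ, ψperp⟫ = 0)
    (s : ℝ) (hs : s = 1 ∨ s = -1) :
    (varOf ψ A + varOf ψ B
        = s * commRe ψ A B + ‖⟪ψ, (A + ((s : ℂ) * Complex.I) • B) ψperp⟫‖ ^ 2)
      ∧ (0 < stdDev ψ A → 0 < stdDev ψ B →
          stdDev ψ A * stdDev ψ B *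
              (1 - (1 / 2) * ‖⟪ψ, (((stdDev ψ A : ℂ))⁻¹ • A
                  + ((s : ℂ) * Complex.I * ((stdDev ψ B : ℂ))⁻¹) • B) ψperp⟫‖ ^ 2)
            = s * (commRe ψ A B / 2)) := by
  set p := ⟪ψ, A ψ⟫ with hp
  set a := ⟪ψperp, A ψ⟫ with ha
  set q := ⟪ψ, B ψ⟫ with hq
  set b := ⟪ψperp, B ψ⟫ with hb
  have hψψ : ⟪ψ, ψ⟫ = (1 : ℂ) := by
    simp [inner_self_eq_norm_sq_to_K, hψ]
  have hpp : ⟪ψperp, ψperp⟫ = (1 : ℂ) := by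
    simp [inner_self_eq_norm_sq_to_K, hperpunit]
  have hperp' : ⟪ψperp, ψ⟫ = 0 := by
    rw [← inner_conj_symm, hperp, map_zero]
  have hAψ : A ψ = p • ψ + a • ψperp :=
    decomp_two hdim ψ ψperp hψ hperpunit hperp (A ψ)
  have hBψ : B ψ = q • ψ + b • ψperp :=
    decomp_two hdim ψ ψperp hψ hperpunit hperp (B ψ)
  have hpim : p.im = 0 := by
    have h : (starRingEnd ℂ) p = p := by
      rw [hp, inner_conj_symm]; exact hA ψ ψ
    exact Complex.conj_eq_iff_im.mp h
  have hqim : q.im = 0 := by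
    have h : (starRingEnd ℂ) q = q := by
      rw [hq, inner_conj_symm]; exact hB ψ ψ
    exact Complex.conj_eq_iff_im.mp h
  have hAA : ⟪ψ, A (A ψ)⟫ = (starRingEnd ℂ) p * p + (starRingEnd ℂ) a * a := by
    rw [← hA ψ (A ψ)]
    conv_lhs => rw [hAψ]
    simp [inner_add_left, inner_add_right, inner_smul_left, inner_smul_right,
      hψψ, hpp, hperp, hperp', -inner_self_eq_norm_sq_to_K]
    ring
  have hBB : ⟪ψ, B (B ψ)⟫ = (starRingEnd ℂ) q * q + (starRingEnd ℂ) b * b := by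
    rw [← hB ψ (B ψ)]
    conv_lhs => rw [hBψ]
    simp [inner_add_left, inner_add_right, inner_smul_left, inner_smul_right,
      hψψ, hpp, hperp, hperp', -inner_self_eq_norm_sq_to_K]
    ring
  have hAB : ⟪ψ, A (B ψ)⟫ = (starRingEnd ℂ) p * q + (starRingEnd ℂ) a * b := by
    rw [← hA ψ (B ψ)]
    conv_lhs => rw [hAψ, hBψ]
    simp [inner_add_left, inner_add_right, inner_smul_left, inner_smul_right,
      hψψ, hpp, hperp, hperp', -inner_self_eq_norm_sq_to_K]
    ring
  have hBA : ⟪ψ, B (A ψ)⟫ = (starRingEnd ℂ) q * p + (starRingEnd ℂ) b * a := by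
    rw [← hB ψ (A ψ)]
    conv_lhs => rw [hAψ, hBψ]
    simp [inner_add_left, inner_add_right, inner_smul_left, inner_smul_right,
      hψψ, hpp, hperp, hperp', -inner_self_eq_norm_sq_to_K]
    ring
  have hApe : ⟪ψ, A ψperp⟫ = (starRingEnd ℂ) a := by
    rw [← hA ψ ψperp]
    conv_lhs => rw [hAψ]
    simp [inner_add_left, inner_smul_left, hperp, hpp, -inner_self_eq_norm_sq_to_K]
  have hBpe : ⟪ψ, B ψperp⟫ = (starRingEnd ℂ) b := by
    rw [← hB ψ ψperp]
    conv_lhs => rw [hBψ]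
    simp [inner_add_left, inner_smul_left, hperp, hpp, -inner_self_eq_norm_sq_to_K]
  have hvarA : varOf ψ A = Complex.normSq a := by
    simp only [varOf, expVal, hAA, ← hp]
    simp [Complex.normSq_apply, Complex.mul_re, Complex.add_re, hpim]
    ring
  have hvarB : varOf ψ B = Complex.normSq b := by
    simp only [varOf, expVal, hBB, ← hq]
    simp [Complex.normSq_apply, Complex.mul_re, Complex.add_re, hqim]
    ring
  have hcomm : commRe ψ A B = 2 * (a.im * b.re - a.re * b.im) := by
    simp only [commRe, LinearMap.sub_apply, LinearMap.comp_apply, inner_sub_right,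
      hAB, hBA]
    simp [Complex.mul_re, Complex.mul_im, Complex.sub_re, Complex.sub_im,
      Complex.add_re, Complex.add_im, hpim, hqim]
    ring
  have hinner1 : ⟪ψ, (A + ((s : ℂ) * Complex.I) • B) ψperp⟫
      = (starRingEnd ℂ) a + (s : ℂ) * Complex.I * (starRingEnd ℂ) b := by
    simp [inner_add_right, inner_smul_right, hApe, hBpe]
  constructor
  · rw [hvarA, hvarB, hcomm, hinner1]
    rcases hs with rfl | rfl <;>
    · rw [show ∀ z : ℂ, ‖z‖ ^ 2 = Complex.normSq z from fun z => by
        rw [Complex.sq_norm]]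
      simp [Complex.normSq_apply, Complex.mul_re, Complex.mul_im,
        Complex.add_re, Complex.add_im]
      ring
  · intro hsA hsB
    have hrA : stdDev ψ A = ‖a‖ := by
      rw [stdDev, hvarA, ← Complex.norm_def]
    have hrB : stdDev ψ B = ‖b‖ := by
      rw [stdDev, hvarB, ← Complex.norm_def]
    set r := ‖a‖ with hr
    set t := ‖b‖ with ht
    have hr0 : 0 < r := hrA ▸ hsA
    have ht0 : 0 < t := hrB ▸ hsB
    have hr2 : r ^ 2 = a.re ^ 2 + a.im ^ 2 := by
      rw [hr, Complex.sq_norm, Complex.normSq_apply]; ring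
    have ht2 : t ^ 2 = b.re ^ 2 + b.im ^ 2 := by
      rw [ht, Complex.sq_norm, Complex.normSq_apply]; ring
    have hinner2 : ⟪ψ, (((stdDev ψ A : ℂ))⁻¹ • A
        + ((s : ℂ) * Complex.I * ((stdDev ψ B : ℂ))⁻¹) • B) ψperp⟫
        = ((r : ℂ))⁻¹ * (starRingEnd ℂ) a
          + (s : ℂ) * Complex.I * ((t : ℂ))⁻¹ * (starRingEnd ℂ) b := by
      rw [hrA, hrB]
      simp [inner_add_right, inner_smul_right, hApe, hBpe]
    rw [hinner2, hrA, hrB, hcomm]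
    rw [show ∀ z : ℂ, ‖z‖ ^ 2 = Complex.normSq z from fun z => by
      rw [Complex.sq_norm]]
    rw [show ((r : ℂ))⁻¹ = ((r⁻¹ : ℝ) : ℂ) by push_cast; ring,
        show ((t : ℂ))⁻¹ = ((t⁻¹ : ℝ) : ℂ) by push_cast; ring]
    simp only [Complex.normSq_apply, Complex.mul_re, Complex.mul_im,
      Complex.add_re, Complex.add_im, Complex.I_re, Complex.I_im,
      Complex.ofReal_re, Complex.ofReal_im, Complex.conj_re, Complex.conj_im]
    rcases hs with rfl | rfl <;> field_simp
    · linear_combination (t^2) * hr2 + (r^2) * ht2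
    · linear_combination (t^2) * hr2 + (r^2) * ht2
end
end

section
/- (Robertson relation for a qubit in Bloch form.) For all unit vectors a, b ∈ ℝ³ and every r ∈ ℝ³ with ‖r‖ ≤ 1, one has √(1 − (a·r)²) · √(1 − (b·r)²) ≥ |(a × b)·r|. -/
noncomputable section

/-- Euclidean dot product on ℝ³. -/
def dot3 (a b : Fin 3 → ℝ) : ℝ := a 0 * b 0 + a 1 * b 1 + a 2 * b 2

/-- Euclidean norm on ℝ³. -/
def norm3 (a : Fin 3 → ℝ) : ℝ := Real.sqrt (dot3 a a)

/-- Cross product on ℝ³. -/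
def cross3 (a b : Fin 3 → ℝ) : Fin 3 → ℝ :=
  ![a 1 * b 2 - a 2 * b 1, a 2 * b 0 - a 0 * b 2, a 0 * b 1 - a 1 * b 0]

theorem robertson_qubit_bloch (a b r : Fin 3 → ℝ)
    (ha : norm3 a = 1) (hb : norm3 b = 1) (hr : norm3 r ≤ 1) :
    Real.sqrt (1 - dot3 a r ^ 2) * Real.sqrt (1 - dot3 b r ^ 2)
      ≥ |dot3 (cross3 a b) r| := by
  have haa : dot3 a a = 1 := by
    have h0 : (0:ℝ) ≤ dot3 a a := by
      unfold dot3; nlinarith [sq_nonneg (a 0), sq_nonneg (a 1), sq_nonneg (a 2)]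
    have := Real.sq_sqrt h0
    rw [show Real.sqrt (dot3 a a) = norm3 a from rfl, ha] at this
    nlinarith
  have hbb : dot3 b b = 1 := by
    have h0 : (0:ℝ) ≤ dot3 b b := by
      unfold dot3; nlinarith [sq_nonneg (b 0), sq_nonneg (b 1), sq_nonneg (b 2)]
    have := Real.sq_sqrt h0
    rw [show Real.sqrt (dot3 b b) = norm3 b from rfl, hb] at this
    nlinarith
  have h0r : (0:ℝ) ≤ dot3 r r := by
    unfold dot3; nlinarith [sq_nonneg (r 0), sq_nonneg (r 1), sq_nonneg (r 2)]
  have hrr : dot3 r r ≤ 1 := by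
    have hr' : Real.sqrt (dot3 r r) ≤ 1 := hr
    nlinarith [Real.sq_sqrt h0r, Real.sqrt_nonneg (dot3 r r)]
  have hCSar : dot3 a r ^ 2 ≤ dot3 a a * dot3 r r := by
    unfold dot3
    nlinarith [sq_nonneg (a 0 * r 1 - a 1 * r 0), sq_nonneg (a 0 * r 2 - a 2 * r 0),
      sq_nonneg (a 1 * r 2 - a 2 * r 1)]
  have hCSbr : dot3 b r ^ 2 ≤ dot3 b b * dot3 r r := by
    unfold dot3
    nlinarith [sq_nonneg (b 0 * r 1 - b 1 * r 0), sq_nonneg (b 0 * r 2 - b 2 * r 0),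
      sq_nonneg (b 1 * r 2 - b 2 * r 1)]
  have hCSab : dot3 a b ^ 2 ≤ dot3 a a * dot3 b b := by
    unfold dot3
    nlinarith [sq_nonneg (a 0 * b 1 - a 1 * b 0), sq_nonneg (a 0 * b 2 - a 2 * b 0),
      sq_nonneg (a 1 * b 2 - a 2 * b 1)]
  have h1 : 0 ≤ 1 - dot3 a r ^ 2 := by nlinarith
  have h2 : 0 ≤ 1 - dot3 b r ^ 2 := by nlinarith
  have hid : (1 - dot3 a r ^ 2) * (1 - dot3 b r ^ 2) - dot3 (cross3 a b) r ^ 2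
      = (1 - dot3 r r) * (1 - dot3 a b ^ 2)
        + (dot3 a b - dot3 a r * dot3 b r) ^ 2 := by
    have haa' := haa; have hbb' := hbb
    unfold dot3 at haa' hbb'
    unfold dot3 cross3
    simp only [Matrix.cons_val_zero, Matrix.cons_val_one, Matrix.head_cons,
      Matrix.cons_val_two, Matrix.tail_cons]
    linear_combination
      ((b 0 * r 0 + b 1 * r 1 + b 2 * r 2) ^ 2 - (r 0 * r 0 + r 1 * r 1 + r 2 * r 2)) * haa'
      + ((a 0 * r 0 + a 1 * r 1 + a 2 * r 2) ^ 2
          - (a 0 * a 0 + a 1 * a 1 + a 2 * a 2) * (r 0 * r 0 + r 1 * r 1 + r 2 * r 2)) * hbb'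
  have hkey : dot3 (cross3 a b) r ^ 2 ≤ (1 - dot3 a r ^ 2) * (1 - dot3 b r ^ 2) := by
    nlinarith [mul_nonneg (by linarith : (0:ℝ) ≤ 1 - dot3 r r)
        (by nlinarith : (0:ℝ) ≤ 1 - dot3 a b ^ 2),
      sq_nonneg (dot3 a b - dot3 a r * dot3 b r)]
  calc |dot3 (cross3 a b) r| = Real.sqrt (dot3 (cross3 a b) r ^ 2) :=
        (Real.sqrt_sq_eq_abs _).symm
    _ ≤ Real.sqrt ((1 - dot3 a r ^ 2) * (1 - dot3 b r ^ 2)) := Real.sqrt_le_sqrt hkey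
    _ = Real.sqrt (1 - dot3 a r ^ 2) * Real.sqrt (1 - dot3 b r ^ 2) := Real.sqrt_mul h1 _
end
end

section
/- (State-independent qubit bound.) For all unit vectors a, b ∈ ℝ³ and every r ∈ ℝ³ with ‖r‖ ≤ 1, one has (a·r)² + (b·r)² ≤ 1 + |a·b|; equivalently, the Bloch-sphere variance sum [1 − (a·r)²] + [1 − (b·r)²] is at least 1 − |a·b|. -/
noncomputable section

set_option maxHeartbeats 1000000 in
theorem state_independent_qubit_bound (a b r : Fin 3 → ℝ)
    (ha : norm3 a = 1) (hb : norm3 b = 1) (hr : norm3 r ≤ 1) :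
    dot3 a r ^ 2 + dot3 b r ^ 2 ≤ 1 + |dot3 a b|
      ∧ (1 - dot3 a r ^ 2) + (1 - dot3 b r ^ 2) ≥ 1 - |dot3 a b| := by
  have haa : dot3 a a = 1 := by
    have h0 : (0:ℝ) ≤ dot3 a a := by
      unfold dot3
      nlinarith [mul_self_nonneg (a 0), mul_self_nonneg (a 1), mul_self_nonneg (a 2)]
    have h1 := Real.sq_sqrt h0
    rw [show Real.sqrt (dot3 a a) = norm3 a from rfl, ha] at h1
    linarith [h1]
  have hbb : dot3 b b = 1 := by
    have h0 : (0:ℝ) ≤ dot3 b b := by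
      unfold dot3
      nlinarith [mul_self_nonneg (b 0), mul_self_nonneg (b 1), mul_self_nonneg (b 2)]
    have h1 := Real.sq_sqrt h0
    rw [show Real.sqrt (dot3 b b) = norm3 b from rfl, hb] at h1
    linarith [h1]
  have hrr : dot3 r r ≤ 1 := by
    have h0 : (0:ℝ) ≤ dot3 r r := by
      unfold dot3
      nlinarith [mul_self_nonneg (r 0), mul_self_nonneg (r 1), mul_self_nonneg (r 2)]
    have h1 := Real.sq_sqrt h0
    have h2 : Real.sqrt (dot3 r r) ≤ 1 := hr
    have h3 : (0:ℝ) ≤ Real.sqrt (dot3 r r) := Real.sqrt_nonneg _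
    nlinarith
  have hrr0 : (0:ℝ) ≤ dot3 r r := by
    unfold dot3
    nlinarith [mul_self_nonneg (r 0), mul_self_nonneg (r 1), mul_self_nonneg (r 2)]
  -- Cauchy–Binet / Gram determinant identity
  have hcb : (a 0 * (b 1 * r 2 - b 2 * r 1) + a 1 * (b 2 * r 0 - b 0 * r 2)
        + a 2 * (b 0 * r 1 - b 1 * r 0)) ^ 2
      = dot3 a a * dot3 b b * dot3 r r + 2 * dot3 a b * dot3 a r * dot3 b r
        - dot3 a a * dot3 b r ^ 2 - dot3 b b * dot3 a r ^ 2 - dot3 r r * dot3 a b ^ 2 := by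
    unfold dot3; ring
  have hdet := sq_nonneg (a 0 * (b 1 * r 2 - b 2 * r 1) + a 1 * (b 2 * r 0 - b 0 * r 2)
        + a 2 * (b 0 * r 1 - b 1 * r 0))
  rw [hcb, haa, hbb] at hdet
  have hgram : dot3 a r ^ 2 + dot3 b r ^ 2 - 2 * dot3 a b * dot3 a r * dot3 b r
      ≤ (1 - dot3 a b ^ 2) * dot3 r r := by nlinarith [hdet]
  have hcs_a : dot3 a r ^ 2 ≤ dot3 r r := by
    have : dot3 a r ^ 2 ≤ dot3 a a * dot3 r r := by
      unfold dot3
      nlinarith [sq_nonneg (a 0 * r 1 - a 1 * r 0), sq_nonneg (a 0 * r 2 - a 2 * r 0),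
        sq_nonneg (a 1 * r 2 - a 2 * r 1)]
    rw [haa] at this; linarith
  have hcs_b : dot3 b r ^ 2 ≤ dot3 r r := by
    have : dot3 b r ^ 2 ≤ dot3 b b * dot3 r r := by
      unfold dot3
      nlinarith [sq_nonneg (b 0 * r 1 - b 1 * r 0), sq_nonneg (b 0 * r 2 - b 2 * r 0),
        sq_nonneg (b 1 * r 2 - b 2 * r 1)]
    rw [hbb] at this; linarith
  have hab : dot3 a b ^ 2 ≤ 1 := by
    have : dot3 a b ^ 2 ≤ dot3 a a * dot3 b b := by
      unfold dot3
      nlinarith [sq_nonneg (a 0 * b 1 - a 1 * b 0), sq_nonneg (a 0 * b 2 - a 2 * b 0),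
        sq_nonneg (a 1 * b 2 - a 2 * b 1)]
    rw [haa, hbb] at this; linarith
  have key : dot3 a r ^ 2 + dot3 b r ^ 2 ≤ 1 + |dot3 a b| := by
    rcases abs_cases (dot3 a b) with ⟨h1, h2⟩ | ⟨h1, h2⟩ <;> rw [h1] <;>
      nlinarith [sq_nonneg (dot3 a r - dot3 b r), sq_nonneg (dot3 a r + dot3 b r),
        hgram, hrr, hrr0, hcs_a, hcs_b, hab,
        mul_nonneg (sub_nonneg.mpr hrr) (sub_nonneg.mpr hab)]
  exact ⟨key, by linarith⟩
end
end

section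
/- (Schrödinger residual for a qubit.) Define the Pauli matrices as complex 2×2 matrices σ₁ = [[0,1],[1,0]], σ₂ = [[0,−i],[i,0]], σ₃ = [[1,0],[0,−1]], and for v ∈ ℝ³ write v·σ = v₁σ₁ + v₂σ₂ + v₃σ₃. Let a, b ∈ ℝ³ be unit vectors and r ∈ ℝ³ with ‖r‖ ≤ 1; set A = a·σ, B = b·σ, ρ = (1/2)(I + r·σ). For a 2×2 matrix O, let ⟨O⟩ = Re Tr(ρO) and ΔO² = ⟨O²⟩ − ⟨O⟩². Let C = −i(AB − BA) and F = (A − ⟨A⟩I)(B − ⟨B⟩I) + (B − ⟨B⟩I)(A − ⟨A⟩I). Then ΔA²·ΔB² − (1/4)⟨C⟩² − (1/4)⟨F⟩² = (1 − (a·b)²)(1 − ‖r‖²). In particular, the Schrödinger uncertainty relation is saturated (the left-hand side vanishes) for every pure qubit state, i.e. whenever ‖r‖ = 1. -/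
noncomputable section

/-- The Pauli matrix σ₁. -/
def pauli1 : Matrix (Fin 2) (Fin 2) ℂ := !![0, 1; 1, 0]

/-- The Pauli matrix σ₂. -/
def pauli2 : Matrix (Fin 2) (Fin 2) ℂ := !![0, -Complex.I; Complex.I, 0]

/-- The Pauli matrix σ₃. -/
def pauli3 : Matrix (Fin 2) (Fin 2) ℂ := !![1, 0; 0, -1]

/-- v·σ = v₁σ₁ + v₂σ₂ + v₃σ₃ for v ∈ ℝ³. -/
def dotPauli (v : Fin 3 → ℝ) : Matrix (Fin 2) (Fin 2) ℂ :=
  (v 0 : ℂ) • pauli1 + (v 1 : ℂ) • pauli2 + (v 2 : ℂ) • pauli3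

/-- Expectation value ⟨O⟩ = Re Tr(ρO). -/
def mExp (ρ O : Matrix (Fin 2) (Fin 2) ℂ) : ℝ := ((ρ * O).trace).re

/-- Variance ΔO² = ⟨O²⟩ − ⟨O⟩². -/
def mVar (ρ O : Matrix (Fin 2) (Fin 2) ℂ) : ℝ := mExp ρ (O * O) - (mExp ρ O) ^ 2


private lemma expA' (a r : Fin 3 → ℝ) :
    mExp (((2:ℂ))⁻¹ • (1 + dotPauli r)) (dotPauli a) = dot3 a r := by
  simp [mExp, dotPauli, pauli1, pauli2, pauli3, dot3, Matrix.trace, Matrix.mul_apply,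
    Fin.sum_univ_succ, Matrix.one_apply, Complex.ext_iff]
  ring

private lemma expAB' (a b r : Fin 3 → ℝ) :
    mExp (((2:ℂ))⁻¹ • (1 + dotPauli r)) (dotPauli a * dotPauli b) = dot3 a b := by
  simp [mExp, dotPauli, pauli1, pauli2, pauli3, dot3, Matrix.trace, Matrix.mul_apply,
    Fin.sum_univ_succ, Matrix.one_apply, Complex.ext_iff]
  ring

private lemma expC' (a b r : Fin 3 → ℝ) :
    mExp (((2:ℂ))⁻¹ • (1 + dotPauli r))
      ((-Complex.I) • (dotPauli a * dotPauli b - dotPauli b * dotPauli a))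
      = 2 * dot3 (cross3 a b) r := by
  simp [mExp, dotPauli, pauli1, pauli2, pauli3, dot3, cross3, Matrix.trace, Matrix.mul_apply,
    Fin.sum_univ_succ, Matrix.one_apply, Complex.ext_iff]
  ring

private lemma expF' (a b r : Fin 3 → ℝ) (α β : ℝ) :
    mExp (((2:ℂ))⁻¹ • (1 + dotPauli r))
      ((dotPauli a - (α:ℂ) • 1) * (dotPauli b - (β:ℂ) • 1)
        + (dotPauli b - (β:ℂ) • 1) * (dotPauli a - (α:ℂ) • 1))
      = 2 * dot3 a b - 2 * β * dot3 a r - 2 * α * dot3 b r + 2 * α * β := by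
  simp [mExp, dotPauli, pauli1, pauli2, pauli3, dot3, Matrix.trace, Matrix.mul_apply,
    Fin.sum_univ_succ, Matrix.one_apply, Complex.ext_iff]
  ring

set_option maxHeartbeats 1000000 in
theorem schrodinger_residual_qubit (a b r : Fin 3 → ℝ)
    (ha : norm3 a = 1) (hb : norm3 b = 1) (hr : norm3 r ≤ 1)
    (A B ρ C F : Matrix (Fin 2) (Fin 2) ℂ)
    (hAdef : A = dotPauli a) (hBdef : B = dotPauli b)
    (hρdef : ρ = ((2 : ℂ))⁻¹ • (1 + dotPauli r))
    (hCdef : C = (-Complex.I) • (A * B - B * A))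
    (hFdef : F = (A - (mExp ρ A : ℂ) • 1) * (B - (mExp ρ B : ℂ) • 1)
        + (B - (mExp ρ B : ℂ) • 1) * (A - (mExp ρ A : ℂ) • 1)) :
    mVar ρ A * mVar ρ B - (1 / 4) * (mExp ρ C) ^ 2 - (1 / 4) * (mExp ρ F) ^ 2
        = (1 - dot3 a b ^ 2) * (1 - norm3 r ^ 2)
      ∧ (norm3 r = 1 →
          mVar ρ A * mVar ρ B - (1 / 4) * (mExp ρ C) ^ 2 - (1 / 4) * (mExp ρ F) ^ 2 = 0) := by
  have hnn : ∀ v : Fin 3 → ℝ, 0 ≤ dot3 v v := by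
    intro v
    unfold dot3
    nlinarith [sq_nonneg (v 0), sq_nonneg (v 1), sq_nonneg (v 2)]
  have hsq : ∀ v : Fin 3 → ℝ, norm3 v ^ 2 = dot3 v v := by
    intro v
    simp [norm3, Real.sq_sqrt (hnn v)]
  have ha2 : dot3 a a = 1 := by have h := hsq a; rw [ha] at h; linarith
  have hb2 : dot3 b b = 1 := by have h := hsq b; rw [hb] at h; linarith
  subst hAdef hBdef hρdef hCdef hFdef
  have hEA := expA' a r
  have hEB := expA' b r
  rw [hEA, hEB]
  have key : mVar ((2:ℂ)⁻¹ • (1 + dotPauli r)) (dotPauli a) *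
        mVar ((2:ℂ)⁻¹ • (1 + dotPauli r)) (dotPauli b)
      - 1 / 4 * mExp ((2:ℂ)⁻¹ • (1 + dotPauli r))
          (-Complex.I • (dotPauli a * dotPauli b - dotPauli b * dotPauli a)) ^ 2
      - 1 / 4 * mExp ((2:ℂ)⁻¹ • (1 + dotPauli r))
          ((dotPauli a - ((dot3 a r : ℝ) : ℂ) • 1) * (dotPauli b - ((dot3 b r : ℝ) : ℂ) • 1)
            + (dotPauli b - ((dot3 b r : ℝ) : ℂ) • 1) * (dotPauli a - ((dot3 a r : ℝ) : ℂ) • 1)) ^ 2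
      = (1 - dot3 a b ^ 2) * (1 - norm3 r ^ 2) := by
    rw [mVar, mVar, hEA, hEB, expAB' a a r, expAB' b b r, expC' a b r,
      expF' a b r (dot3 a r) (dot3 b r), hsq r]
    have hring : ∀ a0 a1 a2 b0 b1 b2 r0 r1 r2 : ℝ,
        (a0*a0+a1*a1+a2*a2 - (a0*r0+a1*r1+a2*r2)^2) *
          (b0*b0+b1*b1+b2*b2 - (b0*r0+b1*r1+b2*r2)^2)
        - 1/4 * (2*((a1*b2-a2*b1)*r0 + (a2*b0-a0*b2)*r1 + (a0*b1-a1*b0)*r2))^2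
        - 1/4 * (2*(a0*b0+a1*b1+a2*b2) - 2*(b0*r0+b1*r1+b2*r2)*(a0*r0+a1*r1+a2*r2)
            - 2*(a0*r0+a1*r1+a2*r2)*(b0*r0+b1*r1+b2*r2)
            + 2*(a0*r0+a1*r1+a2*r2)*(b0*r0+b1*r1+b2*r2))^2
        = ((a0*a0+a1*a1+a2*a2)*(b0*b0+b1*b1+b2*b2) - (a0*b0+a1*b1+a2*b2)^2)
            * (1 - (r0*r0+r1*r1+r2*r2)) := by
      intros; ring
    simp only [dot3, cross3, Matrix.cons_val_zero, Matrix.cons_val_one, Matrix.head_cons,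
      Matrix.cons_val_two, Matrix.tail_cons] at ha2 hb2 ⊢
    linear_combination (hring (a 0) (a 1) (a 2) (b 0) (b 1) (b 2) (r 0) (r 1) (r 2))
      + (1 - (r 0 * r 0 + r 1 * r 1 + r 2 * r 2)) * (b 0 * b 0 + b 1 * b 1 + b 2 * b 2) * ha2
      + (1 - (r 0 * r 0 + r 1 * r 1 + r 2 * r 2)) * hb2
  refine ⟨key, fun hr1 => ?_⟩
  rw [key, hsq r]
  have h := hsq r
  rw [hr1] at h
  rw [← h]
  ring
end
end

section
/- (State-independent variance-sum bound for qubit observables.) Define the Pauli matrices as complex 2×2 matrices σ₁ = [[0,1],[1,0]], σ₂ = [[0,−i],[i,0]], σ₃ = [[1,0],[0,−1]], and for v ∈ ℝ³ write v·σ = v₁σ₁ + v₂σ₂ + v₃σ₃. Let a, b ∈ ℝ³ be unit vectors and set A = a·σ, B = b·σ. Then for every 2×2 complex matrix ρ that is Hermitian, positive semidefinite, and of trace 1 (a qubit density matrix), with ⟨O⟩ = Re Tr(ρO) and ΔO² = ⟨O²⟩ − ⟨O⟩², one has ΔA² + ΔB² ≥ 1 − |a·b|. -/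
open scoped ComplexOrder

noncomputable section

set_option maxHeartbeats 2000000 in
lemma bessel_sos (u0 u1 u2 v0 v1 v2 x y z : ℝ) (h : u0*v0+u1*v1+u2*v2 = 0) :
    (u0^2+u1^2+u2^2)*(v0^2+v1^2+v2^2)*
      ((u0^2+u1^2+u2^2)*(v0^2+v1^2+v2^2)*(x^2+y^2+z^2)
        - (u0*x+u1*y+u2*z)^2*(v0^2+v1^2+v2^2) - (v0*x+v1*y+v2*z)^2*(u0^2+u1^2+u2^2))
    = ((u0^2+u1^2+u2^2)*(v0^2+v1^2+v2^2)*x - (u0*x+u1*y+u2*z)*(v0^2+v1^2+v2^2)*u0 - (v0*x+v1*y+v2*z)*(u0^2+u1^2+u2^2)*v0)^2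
    + ((u0^2+u1^2+u2^2)*(v0^2+v1^2+v2^2)*y - (u0*x+u1*y+u2*z)*(v0^2+v1^2+v2^2)*u1 - (v0*x+v1*y+v2*z)*(u0^2+u1^2+u2^2)*v1)^2
    + ((u0^2+u1^2+u2^2)*(v0^2+v1^2+v2^2)*z - (u0*x+u1*y+u2*z)*(v0^2+v1^2+v2^2)*u2 - (v0*x+v1*y+v2*z)*(u0^2+u1^2+u2^2)*v2)^2 := by
  linear_combination (-2*(u0*x+u1*y+u2*z)*(v0*x+v1*y+v2*z)*(u0^2+u1^2+u2^2)*(v0^2+v1^2+v2^2)) * h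

set_option maxHeartbeats 2000000 in
lemma bessel_ineq (u0 u1 u2 v0 v1 v2 x y z : ℝ) (h : u0*v0+u1*v1+u2*v2 = 0) :
    (u0*x+u1*y+u2*z)^2*(v0^2+v1^2+v2^2) + (v0*x+v1*y+v2*z)^2*(u0^2+u1^2+u2^2)
    ≤ (u0^2+u1^2+u2^2)*(v0^2+v1^2+v2^2)*(x^2+y^2+z^2) := by
  have hU : (0:ℝ) ≤ u0^2+u1^2+u2^2 := by positivity
  have hV : (0:ℝ) ≤ v0^2+v1^2+v2^2 := by positivity
  rcases eq_or_lt_of_le hU with hU0 | hU0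
  · have h0 : u0 = 0 := by nlinarith [sq_nonneg u0, sq_nonneg u1, sq_nonneg u2]
    have h1 : u1 = 0 := by nlinarith [sq_nonneg u0, sq_nonneg u1, sq_nonneg u2]
    have h2 : u2 = 0 := by nlinarith [sq_nonneg u0, sq_nonneg u1, sq_nonneg u2]
    subst h0 h1 h2; ring_nf; positivity
  rcases eq_or_lt_of_le hV with hV0 | hV0
  · have h0 : v0 = 0 := by nlinarith [sq_nonneg v0, sq_nonneg v1, sq_nonneg v2]
    have h1 : v1 = 0 := by nlinarith [sq_nonneg v0, sq_nonneg v1, sq_nonneg v2]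
    have h2 : v2 = 0 := by nlinarith [sq_nonneg v0, sq_nonneg v1, sq_nonneg v2]
    subst h0 h1 h2; ring_nf; positivity
  · have key := bessel_sos u0 u1 u2 v0 v1 v2 x y z h
    have hS : (0:ℝ) ≤ ((u0^2+u1^2+u2^2)*(v0^2+v1^2+v2^2)*x - (u0*x+u1*y+u2*z)*(v0^2+v1^2+v2^2)*u0 - (v0*x+v1*y+v2*z)*(u0^2+u1^2+u2^2)*v0)^2
      + ((u0^2+u1^2+u2^2)*(v0^2+v1^2+v2^2)*y - (u0*x+u1*y+u2*z)*(v0^2+v1^2+v2^2)*u1 - (v0*x+v1*y+v2*z)*(u0^2+u1^2+u2^2)*v1)^2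
      + ((u0^2+u1^2+u2^2)*(v0^2+v1^2+v2^2)*z - (u0*x+u1*y+u2*z)*(v0^2+v1^2+v2^2)*u2 - (v0*x+v1*y+v2*z)*(u0^2+u1^2+u2^2)*v2)^2 := by positivity
    rw [← key] at hS
    have := (mul_nonneg_iff_of_pos_left (mul_pos hU0 hV0)).mp hS
    linarith

lemma scalar_step (U V W s α β : ℝ) (hU : U = 2+2*s) (hV : V = 2-2*s)
    (hW : W ≤ 1) (hW0 : 0 ≤ W) (hs0 : 0 ≤ s) (hs1 : s ≤ 1)
    (hB : α^2*V + β^2*U ≤ U*V*W) (hCu : α^2 ≤ U*W) (hCv : β^2 ≤ V*W) :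
    α^2 + β^2 ≤ 2+2*s := by
  subst hU hV
  rcases eq_or_lt_of_le hs1 with h1 | h1
  · nlinarith [sq_nonneg β]
  · nlinarith [hB, hCv, sq_nonneg β, sq_nonneg α,
      mul_nonneg (mul_nonneg (by linarith : (0:ℝ) ≤ 2+2*s) (by linarith : (0:ℝ) ≤ 2-2*s)) (by linarith : (0:ℝ) ≤ 1-W),
      mul_nonneg (sq_nonneg β) hs0, (by linarith : (0:ℝ) < 2-2*s)]

set_option maxHeartbeats 4000000 in
lemma key_ineq (a0 a1 a2 b0 b1 b2 x y z : ℝ)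
    (ha : a0^2+a1^2+a2^2 = 1) (hb : b0^2+b1^2+b2^2 = 1)
    (hr : x^2+y^2+z^2 ≤ 1) :
    (a0*x+a1*y+a2*z)^2 + (b0*x+b1*y+b2*z)^2 ≤ 1 + |a0*b0+a1*b1+a2*b2| := by
  have horth : (a0+b0)*(a0-b0)+(a1+b1)*(a1-b1)+(a2+b2)*(a2-b2) = 0 := by
    linear_combination ha - hb
  have hB := bessel_ineq (a0+b0) (a1+b1) (a2+b2) (a0-b0) (a1-b1) (a2-b2) x y z horth
  have hCu : ((a0+b0)*x+(a1+b1)*y+(a2+b2)*z)^2 ≤ ((a0+b0)^2+(a1+b1)^2+(a2+b2)^2)*(x^2+y^2+z^2) := by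
    nlinarith [sq_nonneg ((a0+b0)*y-(a1+b1)*x), sq_nonneg ((a0+b0)*z-(a2+b2)*x), sq_nonneg ((a1+b1)*z-(a2+b2)*y)]
  have hCv : ((a0-b0)*x+(a1-b1)*y+(a2-b2)*z)^2 ≤ ((a0-b0)^2+(a1-b1)^2+(a2-b2)^2)*(x^2+y^2+z^2) := by
    nlinarith [sq_nonneg ((a0-b0)*y-(a1-b1)*x), sq_nonneg ((a0-b0)*z-(a2-b2)*x), sq_nonneg ((a1-b1)*z-(a2-b2)*y)]
  obtain ⟨s, hsdef⟩ : ∃ t, a0*b0+a1*b1+a2*b2 = t := ⟨_, rfl⟩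
  obtain ⟨U, hUdef⟩ : ∃ t, (a0+b0)^2+(a1+b1)^2+(a2+b2)^2 = t := ⟨_, rfl⟩
  obtain ⟨V, hVdef⟩ : ∃ t, (a0-b0)^2+(a1-b1)^2+(a2-b2)^2 = t := ⟨_, rfl⟩
  obtain ⟨W, hWdef⟩ : ∃ t, x^2+y^2+z^2 = t := ⟨_, rfl⟩
  obtain ⟨α, hαdef⟩ : ∃ t, (a0+b0)*x+(a1+b1)*y+(a2+b2)*z = t := ⟨_, rfl⟩
  obtain ⟨β, hβdef⟩ : ∃ t, (a0-b0)*x+(a1-b1)*y+(a2-b2)*z = t := ⟨_, rfl⟩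
  have hUeq : U = 2+2*s := by rw [← hUdef, ← hsdef]; linear_combination ha + hb
  have hVeq : V = 2-2*s := by rw [← hVdef, ← hsdef]; linear_combination ha + hb
  have hV0 : 0 ≤ V := by rw [← hVdef]; positivity
  have hU0 : 0 ≤ U := by rw [← hUdef]; positivity
  have hW0 : 0 ≤ W := by rw [← hWdef]; positivity
  simp only [hUdef, hVdef, hWdef, hαdef, hβdef] at hB hCu hCv
  simp only [hWdef] at hr
  have hs1 : s ≤ 1 := by linarith [hVeq ▸ hV0]
  have hs2 : -1 ≤ s := by nlinarith [hUeq ▸ hU0]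
  have hgoal : 2*((a0*x+a1*y+a2*z)^2 + (b0*x+b1*y+b2*z)^2) = α^2+β^2 := by
    rw [← hαdef, ← hβdef]; ring
  simp only [hsdef]
  rcases abs_cases s with ⟨habs, hsgn⟩ | ⟨habs, hsgn⟩ <;> rw [habs]
  · have step := scalar_step U V W s α β hUeq hVeq hr hW0 hsgn hs1 hB hCu hCv
    linarith
  · have hB' : β^2*U + α^2*V ≤ V*U*W := by nlinarith [hB]
    have step := scalar_step V U W (-s) β α (by linarith) (by linarith) hr hW0 (by linarith) (by linarith) hB' hCv hCu
    linarith

lemma dotPauli_eq (v : Fin 3 → ℝ) :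
    dotPauli v = !![(v 2 : ℂ), (v 0 : ℂ) - (v 1 : ℂ)*Complex.I;
                    (v 0 : ℂ) + (v 1 : ℂ)*Complex.I, -(v 2 : ℂ)] := by
  unfold dotPauli pauli1 pauli2 pauli3
  ext i j
  fin_cases i <;> fin_cases j <;> simp <;> ring

lemma norm3_one_dot (a : Fin 3 → ℝ) (ha : norm3 a = 1) : dot3 a a = 1 := by
  have h0 : 0 ≤ dot3 a a := by unfold dot3; nlinarith [sq_nonneg (a 0), sq_nonneg (a 1), sq_nonneg (a 2)]
  have := Real.sq_sqrt h0
  rw [norm3] at ha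
  rw [ha] at this
  linarith [this]

lemma dotPauli_sq (a : Fin 3 → ℝ) (ha : norm3 a = 1) :
    dotPauli a * dotPauli a = 1 := by
  have h1 := norm3_one_dot a ha
  have hc : (a 0 : ℂ)*(a 0)+(a 1)*(a 1)+(a 2)*(a 2) = 1 := by
    have := congrArg (Complex.ofReal) h1
    push_cast [dot3] at this
    exact_mod_cast this
  rw [dotPauli_eq, Matrix.mul_fin_two, Matrix.one_fin_two]
  have e1 : (a 2:ℂ) * (a 2:ℂ) + ((a 0:ℂ) - (a 1:ℂ) * Complex.I) * ((a 0:ℂ) + (a 1:ℂ) * Complex.I) = 1 := by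
    linear_combination hc - (a 1:ℂ)^2*Complex.I_sq
  have e2 : ((a 0:ℂ) + (a 1:ℂ) * Complex.I) * ((a 0:ℂ) - (a 1:ℂ) * Complex.I) + (-(a 2:ℂ)) * (-(a 2:ℂ)) = 1 := by
    linear_combination hc - (a 1:ℂ)^2*Complex.I_sq
  have e3 : (a 2:ℂ) * ((a 0:ℂ) - (a 1:ℂ)*Complex.I) + ((a 0:ℂ) - (a 1:ℂ)*Complex.I) * (-(a 2:ℂ)) = 0 := by ring
  have e4 : ((a 0:ℂ) + (a 1:ℂ)*Complex.I) * (a 2:ℂ) + (-(a 2:ℂ)) * ((a 0:ℂ) + (a 1:ℂ)*Complex.I) = 0 := by ring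
  rw [e1, e2, e3, e4]

set_option maxHeartbeats 1000000 in
theorem state_independent_variance_sum_qubit (a b : Fin 3 → ℝ)
    (ha : norm3 a = 1) (hb : norm3 b = 1)
    (A B : Matrix (Fin 2) (Fin 2) ℂ)
    (hAdef : A = dotPauli a) (hBdef : B = dotPauli b)
    (ρ : Matrix (Fin 2) (Fin 2) ℂ)
    (hherm : ρ.IsHermitian) (hpos : ρ.PosSemidef) (htr : ρ.trace = 1) :
    mVar ρ A + mVar ρ B ≥ 1 - |dot3 a b| := by
  -- basic entries facts
  have h10 : ρ 1 0 = star (ρ 0 1) := by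
    conv_lhs => rw [← star_star (ρ 1 0)]
    rw [hherm.apply 0 1]
  have h00 : (ρ 0 0).im = 0 := by
    have := hherm.apply 0 0
    have := Complex.conj_eq_iff_im.mp (by simpa using this)
    exact this
  have h11 : (ρ 1 1).im = 0 := by
    have := hherm.apply 1 1
    exact Complex.conj_eq_iff_im.mp (by simpa using this)
  have htrace2 : ρ.trace = ρ 0 0 + ρ 1 1 := by
    simp [Matrix.trace_fin_two]
  have hsum : (ρ 0 0).re + (ρ 1 1).re = 1 := by
    have := congrArg Complex.re htr
    rw [htrace2] at htr
    have := congrArg Complex.re htr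
    simpa using this
  -- determinant nonneg: p q ≥ |c|²
  have hdet : ρ.det = ((∏ i, hherm.eigenvalues i : ℝ) : ℂ) := by
    rw [hherm.det_eq_prod_eigenvalues]; push_cast; rfl
  have hdr : 0 ≤ (ρ 0 0 * ρ 1 1 - ρ 0 1 * ρ 1 0).re := by
    rw [← Matrix.det_fin_two ρ, hdet, Complex.ofReal_re]
    exact Finset.prod_nonneg (fun i _ => hpos.eigenvalues_nonneg i)
  have hpq : (ρ 0 1).re^2 + (ρ 0 1).im^2 ≤ (ρ 0 0).re * (ρ 1 1).re := by
    rw [Complex.sub_re, Complex.mul_re, Complex.mul_re, h10] at hdr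
    simp [h00, h11] at hdr
    nlinarith [hdr]
  -- expectation of A*A and B*B
  have hA2 : mExp ρ (A*A) = 1 := by
    rw [hAdef, dotPauli_sq a ha, mExp]
    simp [htr]
  have hB2 : mExp ρ (B*B) = 1 := by
    rw [hBdef, dotPauli_sq b hb, mExp]
    simp [htr]
  -- expectation of A
  have hEA : mExp ρ A = a 0 * (2*(ρ 0 1).re) + a 1 * (-2*(ρ 0 1).im) + a 2 * ((ρ 0 0).re - (ρ 1 1).re) := by
    rw [hAdef, dotPauli_eq, mExp, Matrix.trace_fin_two]
    simp [Matrix.mul_apply, Fin.sum_univ_two, h10, Complex.add_re, Complex.mul_re,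
      Complex.sub_re, Complex.sub_im, Complex.add_im, Complex.mul_im]
    ring
  have hEB : mExp ρ B = b 0 * (2*(ρ 0 1).re) + b 1 * (-2*(ρ 0 1).im) + b 2 * ((ρ 0 0).re - (ρ 1 1).re) := by
    rw [hBdef, dotPauli_eq, mExp, Matrix.trace_fin_two]
    simp [Matrix.mul_apply, Fin.sum_univ_two, h10, Complex.add_re, Complex.mul_re,
      Complex.sub_re, Complex.sub_im, Complex.add_im, Complex.mul_im]
    ring
  have hr : (2*(ρ 0 1).re)^2 + (-2*(ρ 0 1).im)^2 + ((ρ 0 0).re - (ρ 1 1).re)^2 ≤ 1 := by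
    nlinarith [hpq, hsum]
  have ha' : (a 0)^2+(a 1)^2+(a 2)^2 = 1 := by
    have := norm3_one_dot a ha; simp only [dot3] at this; nlinarith [this]
  have hb' : (b 0)^2+(b 1)^2+(b 2)^2 = 1 := by
    have := norm3_one_dot b hb; simp only [dot3] at this; nlinarith [this]
  have key := key_ineq (a 0) (a 1) (a 2) (b 0) (b 1) (b 2)
    (2*(ρ 0 1).re) (-2*(ρ 0 1).im) ((ρ 0 0).re - (ρ 1 1).re) ha' hb' hr
  rw [mVar, mVar, hA2, hB2, hEA, hEB]
  simp only [dot3]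
  linarith [key]
end
end

section
/- (Spin-squeezing/metrology bound.) Let J₁, J₂, J₃ be self-adjoint linear operators on H satisfying the commutation relation J₃∘J₁ − J₁∘J₃ = i·J₂. Suppose ΔJ₁ > 0 and ΔJ₃ > 0, and let ψ⊥ be any unit vector orthogonal to ψ. Then there exists a sign s ∈ {+1, −1} such that, with Θ = |⟪ψ, (J₁/ΔJ₁ + s·i·J₃/ΔJ₃) ψ⊥⟫|², one has 1 − Θ/2 ≥ 0 and 4·ΔJ₁²·ΔJ₃²·(1 − Θ/2)² ≥ ⟨J₂⟩²; in particular, if ⟨J₂⟩ ≠ 0, then ΔJ₁²/⟨J₂⟩² ≥ 1/(4·ΔJ₃²·(1 − Θ/2)²). -/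
open scoped ComplexInnerProductSpace BigOperators

noncomputable section

variable {H : Type*} [NormedAddCommGroup H] [InnerProductSpace ℂ H]

theorem spin_squeezing_metrology_bound
    {H : Type*} [NormedAddCommGroup H] [InnerProductSpace ℂ H] [FiniteDimensional ℂ H]
    (J₁ J₂ J₃ : H →ₗ[ℂ] H)
    (hJ₁ : J₁.IsSymmetric) (hJ₂ : J₂.IsSymmetric) (hJ₃ : J₃.IsSymmetric)
    (hcomm : J₃ ∘ₗ J₁ - J₁ ∘ₗ J₃ = Complex.I • J₂)
    (ψ : H) (hψ : ‖ψ‖ = 1)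
    (hΔ₁ : 0 < stdDev ψ J₁) (hΔ₃ : 0 < stdDev ψ J₃)
    (ψperp : H) (hperpunit : ‖ψperp‖ = 1) (hperp : ⟪ψ, ψperp⟫ = 0) :
    ∃ s : ℝ, (s = 1 ∨ s = -1) ∧
      ∃ Θ : ℝ,
        Θ = ‖⟪ψ, (((stdDev ψ J₁ : ℂ))⁻¹ • J₁
            + ((s : ℂ) * Complex.I * ((stdDev ψ J₃ : ℂ))⁻¹) • J₃) ψperp⟫‖ ^ 2
        ∧ 0 ≤ 1 - Θ / 2
        ∧ 4 * varOf ψ J₁ * varOf ψ J₃ * (1 - Θ / 2) ^ 2 ≥ (expVal ψ J₂) ^ 2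
        ∧ (expVal ψ J₂ ≠ 0 →
            varOf ψ J₁ / (expVal ψ J₂) ^ 2
              ≥ 1 / (4 * varOf ψ J₃ * (1 - Θ / 2) ^ 2)) := by
  have hnormsq : ∀ z : H, ‖z‖ ^ 2 = (⟪z, z⟫).re := fun z => by
    rw [inner_self_eq_norm_sq_to_K]; norm_cast
  have hψψ : ⟪ψ, ψ⟫ = (1 : ℂ) := by
    rw [inner_self_eq_norm_sq_to_K, hψ]; norm_num
  have hre : ∀ (J : H →ₗ[ℂ] H), J.IsSymmetric → ⟪ψ, J ψ⟫ = (expVal ψ J : ℂ) := by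
    intro J hJ
    have h1 : (starRingEnd ℂ) ⟪ψ, J ψ⟫ = ⟪ψ, J ψ⟫ := by
      rw [inner_conj_symm]; exact hJ ψ ψ
    exact (Complex.conj_eq_iff_re.mp h1).symm
  have hre₁ := hre J₁ hJ₁
  have hre₂ := hre J₂ hJ₂
  have hre₃ := hre J₃ hJ₃
  set e₁ := expVal ψ J₁ with he₁
  set e₂ := expVal ψ J₂ with he₂
  set e₃ := expVal ψ J₃ with he₃
  set Δ₁ := stdDev ψ J₁ with hΔ₁def
  set Δ₃ := stdDev ψ J₃ with hΔ₃def
  have hv₁ : 0 < varOf ψ J₁ := Real.sqrt_pos.mp hΔ₁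
  have hv₃ : 0 < varOf ψ J₃ := Real.sqrt_pos.mp hΔ₃
  have hΔ₁sq : Δ₁ ^ 2 = varOf ψ J₁ := Real.sq_sqrt hv₁.le
  have hΔ₃sq : Δ₃ ^ 2 = varOf ψ J₃ := Real.sq_sqrt hv₃.le
  set x := J₁ ψ - (e₁ : ℂ) • ψ with hx
  set y := J₃ ψ - (e₃ : ℂ) • ψ with hy
  have h₁ψ : ⟪J₁ ψ, ψ⟫ = (e₁ : ℂ) := by rw [hJ₁]; exact hre₁
  have h₃ψ : ⟪J₃ ψ, ψ⟫ = (e₃ : ℂ) := by rw [hJ₃]; exact hre₃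
  have hxn : ‖x‖ ^ 2 = varOf ψ J₁ := by
    have hxx : ⟪x, x⟫ = ⟪ψ, J₁ (J₁ ψ)⟫ - (e₁ : ℂ) ^ 2 := by
      simp only [hx, inner_sub_left, inner_sub_right, inner_smul_left, inner_smul_right,
        hψψ, h₁ψ, hre₁, hJ₁ ψ (J₁ ψ), Complex.conj_ofReal]
      ring
    rw [hnormsq x, hxx]
    simp [varOf, ← he₁, ← Complex.ofReal_pow]
  have hyn : ‖y‖ ^ 2 = varOf ψ J₃ := by
    have hyy : ⟪y, y⟫ = ⟪ψ, J₃ (J₃ ψ)⟫ - (e₃ : ℂ) ^ 2 := by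
      simp only [hy, inner_sub_left, inner_sub_right, inner_smul_left, inner_smul_right,
        hψψ, h₃ψ, hre₃, hJ₃ ψ (J₃ ψ), Complex.conj_ofReal]
      ring
    rw [hnormsq y, hyy]
    simp [varOf, ← he₃, ← Complex.ofReal_pow]
  have hxy : ⟪x, y⟫ = ⟪ψ, J₁ (J₃ ψ)⟫ - (e₁ : ℂ) * e₃ := by
    simp only [hx, hy, inner_sub_left, inner_sub_right, inner_smul_left, inner_smul_right,
      hψψ, h₁ψ, hre₁, hre₃, hJ₁ ψ (J₃ ψ), Complex.conj_ofReal]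
    ring
  have hyx : ⟪y, x⟫ = ⟪ψ, J₃ (J₁ ψ)⟫ - (e₁ : ℂ) * e₃ := by
    simp only [hx, hy, inner_sub_left, inner_sub_right, inner_smul_left, inner_smul_right,
      hψψ, h₃ψ, hre₁, hre₃, hJ₃ ψ (J₁ ψ), Complex.conj_ofReal]
    ring
  have hcommψ : J₃ (J₁ ψ) - J₁ (J₃ ψ) = Complex.I • J₂ ψ := by
    have := congrArg (fun T => T ψ) hcomm
    simpa using this
  have hdiff : ⟪x, y⟫ - ⟪y, x⟫ = -(Complex.I * e₂) := by
    rw [hxy, hyx]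
    have h1 : ⟪ψ, J₁ (J₃ ψ)⟫ - ⟪ψ, J₃ (J₁ ψ)⟫ = ⟪ψ, J₁ (J₃ ψ) - J₃ (J₁ ψ)⟫ := by
      rw [inner_sub_right]
    rw [sub_sub_sub_cancel_right, h1]
    have h2 : J₁ (J₃ ψ) - J₃ (J₁ ψ) = -(Complex.I • J₂ ψ) := by
      rw [← hcommψ]; abel
    rw [h2, inner_neg_right, inner_smul_right, hre₂]
  set s : ℝ := if 0 ≤ e₂ then 1 else -1 with hs
  have hse₂ : s * e₂ = |e₂| := by
    rcases le_or_gt 0 e₂ with h | h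
    · simp [hs, h, abs_of_nonneg h]
    · simp [hs, not_le.mpr h, abs_of_neg h]
  have hs2 : s ^ 2 = 1 := by
    rcases le_or_gt 0 e₂ with h | h
    · simp [hs, h]
    · simp [hs, not_le.mpr h]
  have hs2c : (s : ℂ) ^ 2 = 1 := by exact_mod_cast congrArg (fun t : ℝ => (t : ℂ)) hs2
  refine ⟨s, by rcases le_or_gt 0 e₂ with h | h
                · left; simp [hs, h]
                · right; simp [hs, not_le.mpr h], ?_⟩
  set w := ((Δ₁ : ℂ))⁻¹ • x - ((s : ℂ) * Complex.I * ((Δ₃ : ℂ))⁻¹) • y with hw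
  have hinner : ⟪ψ, (((Δ₁ : ℂ))⁻¹ • J₁
      + ((s : ℂ) * Complex.I * ((Δ₃ : ℂ))⁻¹) • J₃) ψperp⟫ = ⟪w, ψperp⟫ := by
    have hx' : ⟪ψ, J₁ ψperp⟫ = ⟪x, ψperp⟫ := by
      rw [hx, inner_sub_left, inner_smul_left, hperp, ← hJ₁]
      simp
    have hy' : ⟪ψ, J₃ ψperp⟫ = ⟪y, ψperp⟫ := by
      rw [hy, inner_sub_left, inner_smul_left, hperp, ← hJ₃]
      simp
    simp only [hw, LinearMap.add_apply, LinearMap.smul_apply, inner_add_right,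
      inner_smul_right, inner_sub_left, inner_smul_left, hx', hy', map_mul,
      Complex.conj_I, Complex.conj_ofReal, map_inv₀]
    ring
  have hΔ₁ne : (Δ₁ : ℂ) ≠ 0 := by exact_mod_cast hΔ₁.ne'
  have hΔ₃ne : (Δ₃ : ℂ) ≠ 0 := by exact_mod_cast hΔ₃.ne'
  have hI2 : ((s : ℂ)) ^ 2 * Complex.I ^ 2 = -1 := by rw [Complex.I_sq, hs2c]; ring
  have hwn : ‖w‖ ^ 2 = 2 - |e₂| / (Δ₁ * Δ₃) := by
    have hww : ⟪w, w⟫ = ((Δ₁:ℂ))⁻¹^2 * ⟪x,x⟫ + ((Δ₃:ℂ))⁻¹^2 * ⟪y,y⟫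
        - (s:ℂ) * Complex.I * ((Δ₁:ℂ))⁻¹ * ((Δ₃:ℂ))⁻¹ * (⟪x,y⟫ - ⟪y,x⟫) := by
      simp only [hw, inner_sub_left, inner_sub_right, inner_smul_left, inner_smul_right,
        map_mul, Complex.conj_I, Complex.conj_ofReal, map_inv₀]
      linear_combination (-(((Δ₃:ℂ))⁻¹ ^ 2 * ⟪y,y⟫)) * hI2
    rw [hdiff] at hww
    have hxr : ⟪x, x⟫ = ((varOf ψ J₁ : ℝ) : ℂ) := by
      rw [inner_self_eq_norm_sq_to_K, ← hxn]; norm_cast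
    have hyr : ⟪y, y⟫ = ((varOf ψ J₃ : ℝ) : ℂ) := by
      rw [inner_self_eq_norm_sq_to_K, ← hyn]; norm_cast
    have hfinal : ⟪w, w⟫ = ((2 - |e₂| / (Δ₁ * Δ₃) : ℝ) : ℂ) := by
      rw [hww, hxr, hyr, ← hΔ₁sq, ← hΔ₃sq, ← hse₂]
      push_cast
      field_simp
      linear_combination ((s:ℂ) * (e₂:ℂ)) * Complex.I_sq
    rw [hnormsq w, hfinal, Complex.ofReal_re]
  set Θ := ‖⟪ψ, (((Δ₁ : ℂ))⁻¹ • J₁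
      + ((s : ℂ) * Complex.I * ((Δ₃ : ℂ))⁻¹) • J₃) ψperp⟫‖ ^ 2 with hΘ
  have hCS : Θ ≤ ‖w‖ ^ 2 := by
    rw [hΘ, hinner]
    calc ‖⟪w, ψperp⟫‖ ^ 2 ≤ (‖w‖ * ‖ψperp‖) ^ 2 :=
          pow_le_pow_left₀ (norm_nonneg _) (norm_inner_le_norm w ψperp) 2
      _ = ‖w‖ ^ 2 := by rw [hperpunit]; ring
  rw [hwn] at hCS
  have hΘ2 : |e₂| / (Δ₁ * Δ₃) / 2 ≤ 1 - Θ / 2 := by linarith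
  have h0 : 0 ≤ 1 - Θ / 2 := le_trans (by positivity) hΘ2
  have hmain : e₂ ^ 2 ≤ 4 * varOf ψ J₁ * varOf ψ J₃ * (1 - Θ / 2) ^ 2 := by
    have hsq : (|e₂| / (Δ₁ * Δ₃) / 2) ^ 2 ≤ (1 - Θ / 2) ^ 2 :=
      pow_le_pow_left₀ (by positivity) hΘ2 2
    rw [← hΔ₁sq, ← hΔ₃sq]
    have hid : 4 * Δ₁ ^ 2 * Δ₃ ^ 2 * ((|e₂| / (Δ₁ * Δ₃) / 2) ^ 2) = e₂ ^ 2 := by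
      rw [div_pow, div_pow, mul_pow, sq_abs]
      field_simp
      ring
    calc e₂ ^ 2 = 4 * Δ₁ ^ 2 * Δ₃ ^ 2 * ((|e₂| / (Δ₁ * Δ₃) / 2) ^ 2) := hid.symm
      _ ≤ 4 * Δ₁ ^ 2 * Δ₃ ^ 2 * (1 - Θ / 2) ^ 2 :=
          mul_le_mul_of_nonneg_left hsq (by positivity)
      _ = 4 * (Δ₁ ^ 2) * (Δ₃ ^ 2) * (1 - Θ / 2) ^ 2 := by ring
  refine ⟨Θ, hΘ, h0, hmain, ?_⟩
  intro hne
  have habs : 0 < |e₂| := abs_pos.mpr hne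
  have hpos : 0 < 1 - Θ / 2 :=
    lt_of_lt_of_le (div_pos (div_pos habs (mul_pos hΔ₁ hΔ₃)) two_pos) hΘ2
  have hA : 0 < 4 * varOf ψ J₃ * (1 - Θ / 2) ^ 2 := by positivity
  have hE : 0 < e₂ ^ 2 := by rw [← sq_abs]; exact pow_pos habs 2
  rw [ge_iff_le, div_le_div_iff₀ hA hE]
  nlinarith [hmain]
end
end
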